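/- arXiv:math/0409257 — 3 statements merged into one kernel-verified Lean document; each statement's English description precedes it below -/
import Mathlib

section
/- Let β > 1 be an algebraic number with minimal polynomial f ∈ R₁, and let V_β be the two-sided beta-shift space. If v, w ∈ V_β satisfy v_n = w_n for every n < 0, v₀ > w₀, and w − v ∈ f(σ̄)(ℓ^∞(ℤ,ℤ)), then v₀ = w₀ + 1, v⁺ is the zero sequence, and w⁺ = e_β^*. Consequently, for every v ∈ V_β one has (v + f(σ̄)(ℓ¹(ℤ,ℤ))) ∩ V_β = {v}, where ℓ¹(ℤ,ℤ) denotes the group of finitely supported integer sequences. -/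
open Filter Topology

/-- The beta-transformation `T_β x = βx (mod 1)`. -/
noncomputable def Tbeta (β : ℝ) : ℝ → ℝ := fun x => Int.fract (β * x)

/-- The beta-expansion of `x ∈ [0,1)`: the digit of index `n+1` is
`e_β(x)_{n+1} = β T_β^n x − T_β^{n+1} x = ⌊β T_β^n x⌋`. -/
noncomputable def ebeta (β : ℝ) (x : ℝ) : ℕ → ℤ := fun n => ⌊β * (Tbeta β)^[n] x⌋

/-- The one-sided beta-shift space. -/
def VbetaPlus (β : ℝ) : Set (ℕ → ℤ) :=
  closure {e | ∃ x : ℝ, 0 ≤ x ∧ x < 1 ∧ e = ebeta β x}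

/-- For `v ∈ ℤ^ℤ`, the one-sided sequence `v⁺ = (v₁, v₂, …)`. -/
def plusPart (v : ℤ → ℤ) : ℕ → ℤ := fun n => v ((n : ℤ) + 1)

/-- The two-sided beta-shift space. -/
def Vbeta (β : ℝ) : Set (ℤ → ℤ) :=
  {v | ∀ n : ℤ, (fun k : ℕ => v (n + (k : ℤ) + 1)) ∈ VbetaPlus β}

/-- Strict lexicographic order on one-sided integer sequences. -/
def lexLt (w v : ℕ → ℤ) : Prop :=
  ∃ N : ℕ, (∀ k < N, w k = v k) ∧ w N < v N

open Finset

lemma Tbeta_mem (β x : ℝ) : Tbeta β x ∈ Set.Ico (0:ℝ) 1 :=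
  ⟨Int.fract_nonneg _, Int.fract_lt_one _⟩

lemma Tbeta_iter_mem (β x : ℝ) (hx : x ∈ Set.Ico (0:ℝ) 1) (k : ℕ) :
    (Tbeta β)^[k] x ∈ Set.Ico (0:ℝ) 1 := by
  cases k with
  | zero => exact hx
  | succ n => rw [Function.iterate_succ_apply']; exact Tbeta_mem β _

lemma ebeta_nonneg {β x : ℝ} (hβ : 1 < β) (hx : x ∈ Set.Ico (0:ℝ) 1) (k : ℕ) :
    0 ≤ ebeta β x k :=
  Int.floor_nonneg.2 (mul_nonneg (by linarith) (Tbeta_iter_mem β x hx k).1)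

lemma ebeta_le {β x : ℝ} (hβ : 1 < β) (hx : x ∈ Set.Ico (0:ℝ) 1) (k : ℕ) :
    ebeta β x k ≤ ⌈β⌉ - 1 := by
  have h2 := (Tbeta_iter_mem β x hx k).2
  have h1 := (Tbeta_iter_mem β x hx k).1
  have hc : β ≤ (⌈β⌉ : ℝ) := Int.le_ceil β
  have hlt : β * (Tbeta β)^[k] x < (⌈β⌉:ℝ) := by nlinarith
  have := Int.floor_lt.2 hlt
  unfold ebeta; omega

lemma ebeta_partial {β : ℝ} (hβ : 1 < β) (x : ℝ) (K : ℕ) :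
    ∑ k ∈ Finset.range K, (ebeta β x k : ℝ) * (β⁻¹)^(k+1)
      = x - (β⁻¹)^K * (Tbeta β)^[K] x := by
  have hb : β ≠ 0 := by linarith
  induction K with
  | zero => simp
  | succ n ih =>
    rw [Finset.sum_range_succ, ih]
    have he : (ebeta β x n : ℝ) = β * (Tbeta β)^[n] x - (Tbeta β)^[n+1] x := by
      rw [Function.iterate_succ_apply']
      show ((⌊β * (Tbeta β)^[n] x⌋ : ℤ) : ℝ) = β * (Tbeta β)^[n] x - Int.fract (β * (Tbeta β)^[n] x)
      rw [Int.fract]; ring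
    rw [he, pow_succ]
    field_simp
    ring

lemma VbetaPlus_approx {β : ℝ} {e : ℕ → ℤ} (he : e ∈ VbetaPlus β) (N : ℕ) :
    ∃ x : ℝ, x ∈ Set.Ico (0:ℝ) 1 ∧ ∀ k ≤ N, e k = ebeta β x k := by
  have hopen : IsOpen {g : ℕ → ℤ | ∀ k ≤ N, g k = e k} := by
    have hs : {g : ℕ → ℤ | ∀ k ≤ N, g k = e k}
        = ⋂ k ∈ Finset.range (N+1), (fun g : ℕ → ℤ => g k) ⁻¹' {e k} := by
      ext g; simp [Nat.lt_succ_iff]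
    rw [hs]
    exact isOpen_biInter_finset fun k _ =>
      (continuous_apply k).isOpen_preimage _ (isOpen_discrete _)
  obtain ⟨g, hg1, hg2⟩ := mem_closure_iff.1 he _ hopen (fun k _ => rfl)
  obtain ⟨x, hx0, hx1, rfl⟩ := hg2
  exact ⟨x, ⟨hx0, hx1⟩, fun k hk => (hg1 k hk).symm⟩

lemma VbetaPlus_digit_bounds {β : ℝ} (hβ : 1 < β) {e : ℕ → ℤ} (he : e ∈ VbetaPlus β) (k : ℕ) :
    0 ≤ e k ∧ e k ≤ ⌈β⌉ - 1 := by
  obtain ⟨x, hx, hxe⟩ := VbetaPlus_approx he k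
  rw [hxe k le_rfl]
  exact ⟨ebeta_nonneg hβ hx k, ebeta_le hβ hx k⟩

noncomputable def bsval (β : ℝ) (e : ℕ → ℤ) : ℝ := ∑' k : ℕ, (e k : ℝ) * (β⁻¹)^(k+1)

lemma bsval_summable {β : ℝ} (hβ : 1 < β) {e : ℕ → ℤ} {B : ℤ} (hB : ∀ k, |e k| ≤ B) :
    Summable (fun k : ℕ => (e k : ℝ) * (β⁻¹)^(k+1)) := by
  have h0 : (0:ℝ) < β := lt_trans one_pos hβ
  have hr0 : (0:ℝ) ≤ β⁻¹ := by positivity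
  have hr1 : β⁻¹ < 1 := inv_lt_one_of_one_lt₀ hβ
  apply Summable.of_abs
  apply Summable.of_nonneg_of_le (fun k => abs_nonneg _) (fun k => ?_)
    (((summable_geometric_of_lt_one hr0 hr1).mul_left ((B:ℝ) * β⁻¹)))
  rw [abs_mul, abs_pow, abs_of_nonneg hr0, pow_succ]
  have h1 : |(e k : ℝ)| ≤ (B:ℝ) := by exact_mod_cast hB k
  have h2 : (0:ℝ) ≤ (β⁻¹)^k * β⁻¹ := by positivity
  have h3 := mul_le_mul_of_nonneg_right h1 h2
  nlinarith [h3]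

lemma one_lt_ceil {β : ℝ} (hβ : 1 < β) : 1 < ⌈β⌉ := Int.lt_ceil.2 (by exact_mod_cast hβ)

lemma VbetaPlus_abs_bound {β : ℝ} (hβ : 1 < β) {e : ℕ → ℤ} (he : e ∈ VbetaPlus β) :
    ∀ k, |e k| ≤ ⌈β⌉ - 1 := by
  intro k
  have h1 := (VbetaPlus_digit_bounds hβ he k).1
  have h2 := (VbetaPlus_digit_bounds hβ he k).2
  have h3 := one_lt_ceil hβ
  rw [abs_le]; omega

lemma VbetaPlus_summable {β : ℝ} (hβ : 1 < β) {e : ℕ → ℤ} (he : e ∈ VbetaPlus β) :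
    Summable (fun k : ℕ => (e k : ℝ) * (β⁻¹)^(k+1)) :=
  bsval_summable hβ (VbetaPlus_abs_bound hβ he)

lemma bsval_nonneg {β : ℝ} (hβ : 1 < β) {e : ℕ → ℤ} (he : e ∈ VbetaPlus β) :
    0 ≤ bsval β e := by
  have h0 : (0:ℝ) < β := lt_trans one_pos hβ
  apply tsum_nonneg
  intro k
  have := (VbetaPlus_digit_bounds hβ he k).1
  have : (0:ℝ) ≤ (e k : ℝ) := by exact_mod_cast this
  positivity

lemma bsval_partial_lt_one {β : ℝ} (hβ : 1 < β) {e : ℕ → ℤ} (he : e ∈ VbetaPlus β) (K : ℕ) :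
    ∑ k ∈ Finset.range K, (e k : ℝ) * (β⁻¹)^(k+1) < 1 := by
  obtain ⟨x, hx, hxe⟩ := VbetaPlus_approx he K
  have heq : ∑ k ∈ Finset.range K, (e k : ℝ) * (β⁻¹)^(k+1)
      = ∑ k ∈ Finset.range K, (ebeta β x k : ℝ) * (β⁻¹)^(k+1) := by
    apply Finset.sum_congr rfl
    intro k hk
    rw [hxe k (le_of_lt (Finset.mem_range.1 hk))]
  rw [heq, ebeta_partial hβ x K]
  have h0 : (0:ℝ) < β := lt_trans one_pos hβ
  have hT := (Tbeta_iter_mem β x hx K).1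
  have hrK : (0:ℝ) ≤ (β⁻¹)^K := by positivity
  nlinarith [hx.2, mul_nonneg hrK hT]

lemma bsval_le_one {β : ℝ} (hβ : 1 < β) {e : ℕ → ℤ} (he : e ∈ VbetaPlus β) :
    bsval β e ≤ 1 := by
  apply Real.tsum_le_of_sum_range_le
  · intro k
    have h0 : (0:ℝ) < β := lt_trans one_pos hβ
    have := (VbetaPlus_digit_bounds hβ he k).1
    have : (0:ℝ) ≤ (e k : ℝ) := by exact_mod_cast this
    positivity
  · exact fun K => le_of_lt (bsval_partial_lt_one hβ he K)

lemma bsval_shift {β : ℝ} (hβ : 1 < β) {e : ℕ → ℤ} {B : ℤ} (hB : ∀ k, |e k| ≤ B) (j : ℕ) :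
    bsval β e = (∑ k ∈ Finset.range j, (e k : ℝ) * (β⁻¹)^(k+1))
      + (β⁻¹)^j * bsval β (fun k => e (k + j)) := by
  have hs := bsval_summable hβ hB
  rw [bsval, ← Summable.sum_add_tsum_nat_add j hs]
  congr 1
  rw [bsval, ← tsum_mul_left]
  congr 1; funext k
  rw [pow_add, pow_add]
  ring

lemma VbetaPlus_shift_one {β : ℝ} {e : ℕ → ℤ} (he : e ∈ VbetaPlus β) :
    (fun k => e (k + 1)) ∈ VbetaPlus β := by
  have hcont : Continuous (fun (g : ℕ → ℤ) (k : ℕ) => g (k+1)) :=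
    continuous_pi fun k => continuous_apply (k+1)
  refine map_mem_closure hcont he ?_
  rintro g ⟨x, hx0, hx1, rfl⟩
  refine ⟨Tbeta β x, (Tbeta_mem β x).1, (Tbeta_mem β x).2, ?_⟩
  funext k
  show ebeta β x (k+1) = ebeta β (Tbeta β x) k
  unfold ebeta
  rw [Function.iterate_succ_apply]

lemma VbetaPlus_shift {β : ℝ} {e : ℕ → ℤ} (he : e ∈ VbetaPlus β) (j : ℕ) :
    (fun k => e (k + j)) ∈ VbetaPlus β := by
  induction j with
  | zero => simpa using he
  | succ n ih =>
    have := VbetaPlus_shift_one ih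
    have heq : (fun k => e (k + 1 + n)) = (fun k => e (k + (n+1))) := by
      funext k; congr 1; omega
    rwa [heq] at this

lemma no_finite_one {β : ℝ} (hβ : 1 < β) {e : ℕ → ℤ} (he : e ∈ VbetaPlus β) (N : ℕ)
    (hz : ∀ k, N < k → e k = 0) (h1 : bsval β e = 1) : False := by
  have hB := VbetaPlus_abs_bound hβ he
  have hsh := bsval_shift hβ hB (N+1)
  have hshift0 : bsval β (fun k => e (k + (N+1))) = 0 := by
    rw [bsval]
    have : ∀ k : ℕ, ((e (k + (N+1)) : ℝ)) * (β⁻¹)^(k+1) = 0 := by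
      intro k
      rw [hz (k + (N+1)) (by omega)]
      simp
    rw [tsum_congr this, tsum_zero]
  rw [h1, hshift0, mul_zero, add_zero] at hsh
  have := bsval_partial_lt_one hβ he (N+1)
  linarith

lemma bsval_tail_nonneg {β : ℝ} (hβ : 1 < β) {e : ℕ → ℤ} (he : e ∈ VbetaPlus β) (j : ℕ) :
    0 ≤ bsval β (fun k => e (k + j)) := bsval_nonneg hβ (VbetaPlus_shift he j)

lemma bsval_tail_le_one {β : ℝ} (hβ : 1 < β) {e : ℕ → ℤ} (he : e ∈ VbetaPlus β) (j : ℕ) :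
    bsval β (fun k => e (k + j)) ≤ 1 := bsval_le_one hβ (VbetaPlus_shift he j)

lemma value_one_unique_aux {β : ℝ} (hβ : 1 < β) {e e' : ℕ → ℤ}
    (he : e ∈ VbetaPlus β) (he' : e' ∈ VbetaPlus β)
    (h1 : bsval β e = 1) (h1' : bsval β e' = 1) (N : ℕ)
    (hagree : ∀ k < N, e k = e' k) (hN : e N < e' N) : False := by
  have h0 : (0:ℝ) < β := lt_trans one_pos hβ
  have hrpos : ∀ m : ℕ, (0:ℝ) < (β⁻¹)^m := fun m => by positivity
  have hsh := bsval_shift hβ (VbetaPlus_abs_bound hβ he) (N+1)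
  have hsh' := bsval_shift hβ (VbetaPlus_abs_bound hβ he') (N+1)
  rw [h1] at hsh; rw [h1'] at hsh'
  have hsum : ∑ k ∈ Finset.range (N+1), (e k : ℝ) * (β⁻¹)^(k+1)
      = (∑ k ∈ Finset.range N, (e' k : ℝ) * (β⁻¹)^(k+1)) + (e N : ℝ) * (β⁻¹)^(N+1) := by
    rw [Finset.sum_range_succ]
    congr 1
    exact Finset.sum_congr rfl fun k hk => by rw [hagree k (Finset.mem_range.1 hk)]
  have hsum' : ∑ k ∈ Finset.range (N+1), (e' k : ℝ) * (β⁻¹)^(k+1)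
      = (∑ k ∈ Finset.range N, (e' k : ℝ) * (β⁻¹)^(k+1)) + (e' N : ℝ) * (β⁻¹)^(N+1) :=
    Finset.sum_range_succ _ N
  set s := bsval β (fun k => e (k + (N+1)))
  set s' := bsval β (fun k => e' (k + (N+1)))
  have hs0 : 0 ≤ s := bsval_tail_nonneg hβ he (N+1)
  have hs1 : s ≤ 1 := bsval_tail_le_one hβ he (N+1)
  have hs0' : 0 ≤ s' := bsval_tail_nonneg hβ he' (N+1)
  have hs1' : s' ≤ 1 := bsval_tail_le_one hβ he' (N+1)
  -- (e' N - e N) * r^(N+1) = r^(N+1) * (s - s')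
  have hkey : ((e' N : ℝ) - e N) * (β⁻¹)^(N+1) = (β⁻¹)^(N+1) * (s - s') := by
    rw [hsum] at hsh; rw [hsum'] at hsh'
    linarith [hsh, hsh']
  have hge : (1:ℝ) ≤ (e' N : ℝ) - e N := by
    have : e N + 1 ≤ e' N := hN
    have : ((e N : ℝ)) + 1 ≤ (e' N : ℝ) := by exact_mod_cast this
    linarith
  have hrp := hrpos (N+1)
  -- from hkey : e'N - eN = s - s' ≤ 1, and ≥ 1, so s - s' = 1, s' = 0
  have hdiff : (e' N : ℝ) - e N = s - s' :=
    mul_right_cancel₀ (ne_of_gt hrp) (by rw [hkey]; ring)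
  have hs'0 : s' = 0 := by nlinarith
  have hs1eq : s = 1 := by nlinarith
  -- s' = 0 ⇒ all digits of e' beyond N vanish
  have hzero : ∀ k, N < k → e' k = 0 := by
    intro k hk
    have hmem := VbetaPlus_shift he' (N+1)
    have hsumm := VbetaPlus_summable hβ hmem
    have hnn : ∀ j : ℕ, 0 ≤ ((e' (j + (N+1)) : ℝ)) * (β⁻¹)^(j+1) := by
      intro j
      have := (VbetaPlus_digit_bounds hβ he' (j + (N+1))).1
      have : (0:ℝ) ≤ (e' (j + (N+1)) : ℝ) := by exact_mod_cast this
      positivity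
    set j := k - (N+1) with hj
    have hkj : k = j + (N+1) := by omega
    have hterm : ((e' (j + (N+1)) : ℝ)) * (β⁻¹)^(j+1) ≤ s' := by
      exact Summable.le_tsum hsumm j fun m _ => hnn m
    rw [hs'0] at hterm
    have := hnn j
    have hzero' : ((e' (j + (N+1)) : ℝ)) * (β⁻¹)^(j+1) = 0 := le_antisymm hterm this
    have hrp' := hrpos (j+1)
    have hez : (e' (j + (N+1)) : ℝ) = 0 := by
      rcases mul_eq_zero.1 hzero' with h | h
      · exact h
      · exact absurd h (ne_of_gt hrp')
    rw [hkj]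
    exact_mod_cast hez
  exact no_finite_one hβ he' N hzero h1'

lemma value_one_unique {β : ℝ} (hβ : 1 < β) {e e' : ℕ → ℤ}
    (he : e ∈ VbetaPlus β) (he' : e' ∈ VbetaPlus β)
    (h1 : bsval β e = 1) (h1' : bsval β e' = 1) : e = e' := by
  by_contra hne
  have hex : ∃ n, e n ≠ e' n := by
    by_contra h; push_neg at h; exact hne (funext h)
  set N := Nat.find hex with hNdef
  have hN : e N ≠ e' N := Nat.find_spec hex
  have hagree : ∀ k < N, e k = e' k := fun k hk => not_not.1 (Nat.find_min hex hk)
  rcases lt_or_gt_of_ne hN with h | h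
  · exact value_one_unique_aux hβ he he' h1 h1' N hagree h
  · exact value_one_unique_aux hβ he' he h1' h1 N (fun k hk => (hagree k hk).symm) h

lemma bsval_le_max {β : ℝ} (hβ : 1 < β) {estar : ℕ → ℤ}
    (hestar : estar ∈ VbetaPlus β ∧ ∀ e ∈ VbetaPlus β, e = estar ∨ lexLt e estar)
    {e : ℕ → ℤ} (he : e ∈ VbetaPlus β) : bsval β e ≤ bsval β estar := by
  rcases hestar.2 e he with rfl | ⟨N, hagree, hN⟩
  · exact le_refl _
  have h0 : (0:ℝ) < β := lt_trans one_pos hβ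
  have hrp : (0:ℝ) < (β⁻¹)^(N+1) := by positivity
  have hsh := bsval_shift hβ (VbetaPlus_abs_bound hβ he) (N+1)
  have hsh' := bsval_shift hβ (VbetaPlus_abs_bound hβ hestar.1) (N+1)
  have hsum : ∑ k ∈ Finset.range (N+1), (e k : ℝ) * (β⁻¹)^(k+1)
      = (∑ k ∈ Finset.range N, (estar k : ℝ) * (β⁻¹)^(k+1)) + (e N : ℝ) * (β⁻¹)^(N+1) := by
    rw [Finset.sum_range_succ]
    congr 1
    exact Finset.sum_congr rfl fun k hk => by rw [hagree k (Finset.mem_range.1 hk)]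
  have hsum' : ∑ k ∈ Finset.range (N+1), (estar k : ℝ) * (β⁻¹)^(k+1)
      = (∑ k ∈ Finset.range N, (estar k : ℝ) * (β⁻¹)^(k+1)) + (estar N : ℝ) * (β⁻¹)^(N+1) :=
    Finset.sum_range_succ _ N
  have hs1 : bsval β (fun k => e (k + (N+1))) ≤ 1 := bsval_tail_le_one hβ he (N+1)
  have hs0' : 0 ≤ bsval β (fun k => estar (k + (N+1))) := bsval_tail_nonneg hβ hestar.1 (N+1)
  have hge : ((e N : ℝ)) + 1 ≤ (estar N : ℝ) := by exact_mod_cast hN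
  rw [hsh, hsh', hsum, hsum']
  nlinarith [hrp]
variable {β : ℝ} {f : Polynomial ℤ}

lemma natDegree_pos_of_root (hβ : 1 < β) (hirr : Irreducible f)
    (hroot : Polynomial.aeval β f = 0) : 0 < f.natDegree := by
  by_contra h
  push_neg at h
  have hd : f.natDegree = 0 := Nat.le_zero.1 h
  have hC := Polynomial.eq_C_of_natDegree_eq_zero hd
  rw [hC, Polynomial.aeval_C] at hroot
  simp only [algebraMap_int_eq, eq_intCast] at hroot
  have h0 : f.coeff 0 = 0 := by exact_mod_cast hroot
  rw [h0, Polynomial.C_0] at hC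
  exact not_irreducible_zero (hC ▸ hirr)

lemma coeff_zero_ne (hβ : 1 < β) (hirr : Irreducible f)
    (hroot : Polynomial.aeval β f = 0) : f.coeff 0 ≠ 0 := by
  intro h
  obtain ⟨g, hg⟩ := Polynomial.X_dvd_iff.2 h
  rcases hirr.isUnit_or_isUnit hg with hu | hu
  · exact Polynomial.not_isUnit_X hu
  · obtain ⟨r, hr, hrg⟩ := Polynomial.isUnit_iff.1 hu
    rw [hg, ← hrg, map_mul, Polynomial.aeval_X, Polynomial.aeval_C] at hroot
    simp only [algebraMap_int_eq, eq_intCast] at hroot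
    have hr0 : (r : ℝ) ≠ 0 := by
      rcases Int.isUnit_iff.1 hr with rfl | rfl <;> norm_num
    rcases mul_eq_zero.1 hroot with h' | h'
    · linarith
    · exact hr0 (by exact_mod_cast h')

lemma f_primitive (hβ : 1 < β) (hirr : Irreducible f)
    (hroot : Polynomial.aeval β f = 0) : f.IsPrimitive := by
  intro r hr
  obtain ⟨g, hg⟩ := hr
  rcases hirr.isUnit_or_isUnit hg with hu | hu
  · exact Polynomial.isUnit_C.1 hu
  · exfalso
    obtain ⟨u, huu, hug⟩ := Polynomial.isUnit_iff.1 hu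
    have hdeg : f.natDegree = 0 := by
      rw [hg, ← hug, ← Polynomial.C_mul]
      exact Polynomial.natDegree_C _
    have := natDegree_pos_of_root hβ hirr hroot
    omega

set_option maxHeartbeats 1000000 in
set_option synthInstance.maxHeartbeats 400000 in
lemma y_vanish (hβ : 1 < β) (hirr : Irreducible f)
    (hroot : Polynomial.aeval β f = 0) (y : ℤ → ℤ) (C : ℤ) (hC : ∀ n, |y n| ≤ C)
    (hrec : ∀ n : ℤ, n < 0 →
      ∑ k ∈ Finset.range (f.natDegree + 1), f.coeff k * y (n + (k:ℤ)) = 0) :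
    ∀ n : ℤ, n ≤ (f.natDegree : ℤ) - 1 → y n = 0 := by
  set d := f.natDegree with hd
  have hdpos : 0 < d := natDegree_pos_of_root hβ hirr hroot
  have hf0 : f.coeff 0 ≠ 0 := coeff_zero_ne hβ hirr hroot
  have hfd : f.coeff d ≠ 0 := by
    rw [hd, Polynomial.coeff_natDegree]
    exact Polynomial.leadingCoeff_ne_zero.2 hirr.ne_zero
  -- pigeonhole
  obtain ⟨m1, m2, hne, heq⟩ := Finite.exists_ne_map_eq_of_infinite
    (fun (m : ℕ) => fun (i : Fin (d+1)) =>
      (⟨y ((i:ℤ) - m), Set.mem_Icc.2 (abs_le.1 (hC _))⟩ : Set.Icc (-C) C))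
  have happ : ∀ i : Fin (d+1), y ((i:ℤ) - m1) = y ((i:ℤ) - m2) :=
    fun i => Subtype.ext_iff.1 (congrFun heq i)
  have hwin : ∃ M1 M2 : ℕ, M1 < M2 ∧
      ∀ i : Fin (d+1), y ((i:ℤ) - M2 + ((M2:ℤ) - (M1:ℤ))) = y ((i:ℤ) - M2) := by
    rcases lt_or_gt_of_ne hne with h | h
    · refine ⟨m1, m2, h, fun i => ?_⟩
      rw [show (i:ℤ) - m2 + ((m2:ℤ) - m1) = (i:ℤ) - m1 by ring]
      exact happ i
    · refine ⟨m2, m1, h, fun i => ?_⟩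
      rw [show (i:ℤ) - m1 + ((m1:ℤ) - m2) = (i:ℤ) - m2 by ring]
      exact (happ i).symm
  obtain ⟨M1, M2, hM, hwin⟩ := hwin
  set p : ℤ := (M2:ℤ) - M1 with hpdef
  have hp : 0 < p := by omega
  set a : ℤ := -(M2:ℤ) with hadef
  have base : ∀ j : ℤ, a ≤ j → j ≤ a + d → y (j + p) = y j := by
    intro j h1 h2
    have hjn : (0:ℤ) ≤ j + M2 := by omega
    have hlt : (j + (M2:ℤ)).toNat < d + 1 := by omega
    have := hwin ⟨(j + (M2:ℤ)).toNat, hlt⟩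
    have hcast : ((((j + (M2:ℤ)).toNat : ℕ)) : ℤ) = j + M2 := Int.toNat_of_nonneg hjn
    simp only [Fin.val_mk] at this
    rw [hcast] at this
    rw [show j + (M2:ℤ) - M2 + ((M2:ℤ) - M1) = j + p by ring,
        show j + (M2:ℤ) - M2 = j by ring] at this
    exact this
  have hDrec : ∀ n : ℤ, n + p < 0 →
      ∑ k ∈ Finset.range (d+1), f.coeff k * (y (n + p + (k:ℤ)) - y (n + (k:ℤ))) = 0 := by
    intro n hn
    have h1 := hrec (n+p) hn
    have h2 := hrec n (by omega)
    have hsplit : ∑ k ∈ Finset.range (d+1), f.coeff k * (y (n + p + (k:ℤ)) - y (n + (k:ℤ)))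
        = (∑ k ∈ Finset.range (d+1), f.coeff k * y (n + p + (k:ℤ)))
          - ∑ k ∈ Finset.range (d+1), f.coeff k * y (n + (k:ℤ)) := by
      rw [← Finset.sum_sub_distrib]
      exact Finset.sum_congr rfl fun k _ => by ring
    rw [hsplit, h1, h2, sub_zero]
  -- upward propagation
  have up : ∀ j : ℕ, ∀ n : ℤ, a ≤ n → n ≤ a + d + j → n + p ≤ (d:ℤ) - 1 → y (n + p) = y n := by
    intro j
    induction j with
    | zero => exact fun n h1 h2 _ => base n h1 (by omega)
    | succ j ih =>
      intro n h1 h2 h3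
      by_cases hc : n ≤ a + d + j
      · exact ih n h1 hc h3
      have hn : n = a + d + j + 1 := by omega
      have hrecn := hDrec (n - d) (by omega)
      have hlow : ∀ k ∈ Finset.range d,
          f.coeff k * (y (n - d + p + (k:ℤ)) - y (n - d + (k:ℤ))) = 0 := by
        intro k hk
        have hk' := Finset.mem_range.1 hk
        have hih : y ((n - d + (k:ℤ)) + p) = y (n - d + (k:ℤ)) :=
          ih (n - d + (k:ℤ)) (by omega) (by omega) (by omega)
        rw [show n - (d:ℤ) + p + (k:ℤ) = (n - d + (k:ℤ)) + p by ring, hih, sub_self, mul_zero]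
      rw [Finset.sum_range_succ, Finset.sum_eq_zero hlow, zero_add] at hrecn
      have hz := (mul_eq_zero.1 hrecn).resolve_left hfd
      have hz' : y (n - d + p + (d:ℤ)) = y (n - d + (d:ℤ)) := by omega
      rw [show n - (d:ℤ) + p + (d:ℤ) = n + p by ring, show n - (d:ℤ) + (d:ℤ) = n by ring] at hz'
      exact hz'
  -- downward propagation
  have down : ∀ j : ℕ, y ((a - 1 - j) + p) = y (a - 1 - j) := by
    intro j
    induction j using Nat.strong_induction_on with
    | _ j ih =>
      set n : ℤ := a - 1 - j with hndef
      have hrecn := hDrec n (by omega)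
      have hhigh : ∀ k ∈ Finset.range d,
          f.coeff (k+1) * (y (n + p + ((k+1:ℕ):ℤ)) - y (n + ((k+1:ℕ):ℤ))) = 0 := by
        intro k hk
        have hk' := Finset.mem_range.1 hk
        have hper : y ((n + ((k+1:ℕ):ℤ)) + p) = y (n + ((k+1:ℕ):ℤ)) := by
          by_cases hcase : a ≤ n + ((k+1:ℕ):ℤ)
          · exact base (n + ((k+1:ℕ):ℤ)) hcase (by push_cast; omega)
          · obtain ⟨j', hj'lt, hj'eq⟩ : ∃ j' : ℕ, j' < j ∧ n + ((k+1:ℕ):ℤ) = a - 1 - j' := by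
              refine ⟨j - k - 1, by omega, by push_cast; omega⟩
            rw [hj'eq]
            exact ih j' hj'lt
        rw [show n + p + ((k+1:ℕ):ℤ) = (n + ((k+1:ℕ):ℤ)) + p by ring, hper, sub_self, mul_zero]
      rw [Finset.sum_range_succ', Finset.sum_eq_zero hhigh] at hrecn
      simp only [Nat.cast_zero, add_zero, zero_add] at hrecn
      have hz := (mul_eq_zero.1 hrecn).resolve_left hf0
      omega
  -- full periodicity below d-1
  have per : ∀ n : ℤ, n + p ≤ (d:ℤ) - 1 → y (n + p) = y n := by
    intro n h
    by_cases hc : a ≤ n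
    · exact up (n - a).toNat n hc (by omega) h
    · have hn : n = a - 1 - ((a - 1 - n).toNat : ℤ) := by omega
      rw [hn]
      exact down (a - 1 - n).toNat
  -- iterated periodicity
  have K : ∀ (j : ℕ) (n : ℤ), n + p * j ≤ (d:ℤ) - 1 → y n = y (n + p * j) := by
    intro j
    induction j with
    | zero => intro n _; simp
    | succ j ih =>
      intro n h
      have hpj : 0 ≤ p * j := mul_nonneg (le_of_lt hp) (by positivity)
      have hstep : p * ((j:ℤ) + 1) = p * j + p := by ring
      have h1 : n + p ≤ (d:ℤ) - 1 := by
        push_cast at h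
        rw [hstep] at h
        linarith
      have h2 : (n + p) + p * j ≤ (d:ℤ) - 1 := by push_cast at h ⊢; linarith
      calc y n = y (n + p) := (per n h1).symm
        _ = y ((n + p) + p * j) := ih (n + p) h2
        _ = y (n + p * ((j:ℕ):ℤ) + p) := by rw [show (n + p) + p * (j:ℤ) = n + p * ((j:ℕ):ℤ) + p by push_cast; ring]
        _ = y (n + p * ((j+1:ℕ):ℤ)) := by rw [show n + p * ((j:ℕ):ℤ) + p = n + p * ((j+1:ℕ):ℤ) by push_cast; ring]
  have Kle : ∀ A B : ℤ, A ≤ B → A ≤ (d:ℤ) - 1 → B ≤ (d:ℤ) - 1 → p ∣ B - A → y A = y B := by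
    intro A B hAB hA hB hdvd
    obtain ⟨t, ht⟩ := hdvd
    have ht0 : 0 ≤ t := by nlinarith
    have htn : ((t.toNat : ℕ) : ℤ) = t := Int.toNat_of_nonneg ht0
    have hBA : B = A + p * (t.toNat : ℤ) := by rw [htn]; omega
    rw [hBA]
    exact K t.toNat A (by rw [← hBA]; exact hB)
  have Keq : ∀ A B : ℤ, A ≤ (d:ℤ) - 1 → B ≤ (d:ℤ) - 1 → p ∣ B - A → y A = y B := by
    intro A B hA hB hdvd
    rcases le_total A B with h | h
    · exact Kle A B h hA hB hdvd
    · exact (Kle B A h hB hA (dvd_sub_comm.1 hdvd)).symm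
  -- periodic extension
  set q : ℤ := (d:ℤ) - 1 - p with hqdef
  have hqd : q ≤ (d:ℤ) - 1 := by omega
  set idx : ℤ → ℤ := fun n => n - p * max 0 (n - q) with hidxdef
  have hidxle : ∀ n, idx n ≤ q := by
    intro n
    rcases le_or_gt n q with h | h
    · simp only [hidxdef]
      rw [max_eq_left (by omega)]
      omega
    · have hm : max (0:ℤ) (n - q) = n - q := max_eq_right (by omega)
      simp only [hidxdef]
      rw [hm]
      nlinarith
  have hidxdvd : ∀ n, p ∣ n - idx n := fun n => ⟨max 0 (n - q), by simp only [hidxdef]; ring⟩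
  set zq : ℤ → ℚ := fun n => ((y (idx n) : ℚ)) with hzqdef
  have hzper : ∀ n : ℤ, zq (n + p) = zq n := by
    intro n
    obtain ⟨s1, hs1⟩ := hidxdvd (n + p)
    obtain ⟨s2, hs2⟩ := hidxdvd n
    have hdvd : p ∣ idx n - idx (n + p) := ⟨s1 - s2 - 1, by linarith [hs1, hs2]⟩
    have := Keq (idx (n+p)) (idx n) (le_trans (hidxle _) hqd) (le_trans (hidxle _) hqd) hdvd
    simp only [hzqdef]
    exact_mod_cast congrArg (fun z : ℤ => (z : ℚ)) this
  have hzrec : ∀ n : ℤ, ∑ k ∈ Finset.range (d+1), (f.coeff k : ℚ) * zq (n + (k:ℤ)) = 0 := by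
    intro n
    set t : ℤ := max 0 (n+1) with htdef
    have ht : n - p * t ≤ -1 := by
      rcases le_or_gt (n+1) 0 with h | h
      · have : t = 0 := by simp only [htdef]; omega
        rw [this]; omega
      · have htt : t = n + 1 := by simp only [htdef]; omega
        rw [htt]
        nlinarith
    have hterm : ∀ k ∈ Finset.range (d+1), zq (n + (k:ℤ)) = ((y (n - p*t + (k:ℤ)) : ℚ)) := by
      intro k hk
      have hk' := Finset.mem_range.1 hk
      have hb : n - p*t + (k:ℤ) ≤ (d:ℤ) - 1 := by
        have : (k:ℤ) ≤ d := by exact_mod_cast Nat.lt_succ_iff.1 hk'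
        linarith
      have hdvd : p ∣ (n - p*t + (k:ℤ)) - idx (n + (k:ℤ)) := by
        obtain ⟨s1, hs1⟩ := hidxdvd (n + (k:ℤ))
        exact ⟨s1 - t, by linarith [hs1]⟩
      have := Keq (idx (n + (k:ℤ))) (n - p*t + (k:ℤ)) (le_trans (hidxle _) hqd) hb hdvd
      simp only [hzqdef]
      exact_mod_cast congrArg (fun z : ℤ => (z : ℚ)) this
    rw [Finset.sum_congr rfl (fun k hk => by rw [hterm k hk] :
      ∀ k ∈ Finset.range (d+1), (f.coeff k : ℚ) * zq (n + (k:ℤ))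
        = (f.coeff k : ℚ) * ((y (n - p*t + (k:ℤ)) : ℚ)))]
    have hr := hrec (n - p*t) (by omega)
    have hcast := congrArg (fun z : ℤ => (z : ℚ)) hr
    push_cast at hcast
    exact hcast
  -- shift operator on ℚ-valued sequences
  set S : (ℤ → ℚ) →ₗ[ℚ] (ℤ → ℚ) :=
    { toFun := fun z n => z (n+1), map_add' := fun a b => rfl, map_smul' := fun c a => rfl }
    with hSdef
  have hSpow : ∀ (i : ℕ) (z : ℤ → ℚ) (n : ℤ), (S^i) z n = z (n + i) := by
    intro i
    induction i with
    | zero => intro z n; simp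
    | succ i ih =>
      intro z n
      rw [pow_succ]
      have hmul : (S^i * S) z = (S^i) (S z) := rfl
      rw [hmul, ih]
      show z ((n + i) + 1) = z (n + (i+1:ℕ))
      congr 1
      push_cast
      ring
  have haeval : ∀ (g : Polynomial ℚ) (z : ℤ → ℚ) (n : ℤ),
      (Polynomial.aeval S g) z n
        = ∑ k ∈ Finset.range (g.natDegree + 1), g.coeff k * z (n + (k:ℤ)) := by
    intro g z n
    rw [Polynomial.aeval_eq_sum_range]
    rw [LinearMap.sum_apply]
    rw [Finset.sum_apply]
    apply Finset.sum_congr rfl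
    intro k _
    rw [LinearMap.smul_apply]
    rw [Pi.smul_apply, hSpow k z n, smul_eq_mul]
  set fQ : Polynomial ℚ := f.map (Int.castRingHom ℚ) with hfQdef
  have hfQdeg : fQ.natDegree = d := by
    rw [hfQdef]
    refine Polynomial.natDegree_map_eq_of_injective ?_ f
    intro a b h
    simp only [eq_intCast] at h
    exact_mod_cast h
  have hfz : (Polynomial.aeval S fQ) zq = 0 := by
    funext n
    rw [haeval fQ zq n, hfQdeg]
    have : ∀ k ∈ Finset.range (d+1), fQ.coeff k * zq (n + (k:ℤ))
        = (f.coeff k : ℚ) * zq (n + (k:ℤ)) := by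
      intro k _
      rw [hfQdef, Polynomial.coeff_map]
      norm_num
    rw [Finset.sum_congr rfl this, hzrec n]
    simp
  set pn : ℕ := p.toNat with hpn
  have hpnz : pn ≠ 0 := by omega
  have hpnp : ((pn:ℕ):ℤ) = p := Int.toNat_of_nonneg (le_of_lt hp)
  set Xp : Polynomial ℚ := Polynomial.X ^ pn - 1 with hXp
  have hxz : (Polynomial.aeval S Xp) zq = 0 := by
    rw [hXp, map_sub, map_pow, Polynomial.aeval_X, map_one]
    funext n
    rw [LinearMap.sub_apply]
    have h1 : ((S^pn) zq) n = zq (n + pn) := hSpow pn zq n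
    have h2 : ((1 : (ℤ → ℚ) →ₗ[ℚ] (ℤ → ℚ)) zq) n = zq n := rfl
    rw [Pi.sub_apply, h1, h2]
    rw [hpnp, hzper n]
    simp
  -- coprimality
  have hprim : f.IsPrimitive := f_primitive hβ hirr hroot
  have hfQirr : Irreducible fQ :=
    (Polynomial.IsPrimitive.Int.irreducible_iff_irreducible_map_cast hprim).1 hirr
  have hndvd : ¬ fQ ∣ Xp := by
    intro hdvd
    obtain ⟨g, hg⟩ := hdvd
    have h1 : Polynomial.aeval β fQ = 0 := by
      rw [hfQdef, show (Int.castRingHom ℚ) = algebraMap ℤ ℚ from rfl,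
        Polynomial.aeval_map_algebraMap]
      exact hroot
    have h2 : Polynomial.aeval β Xp = 0 := by rw [hg, map_mul, h1, zero_mul]
    rw [hXp, map_sub, map_pow, Polynomial.aeval_X, map_one] at h2
    have hb : β ^ pn = 1 := by linarith
    have hgt : (1:ℝ) < β ^ pn := one_lt_pow₀ hβ hpnz
    linarith
  obtain ⟨A, B, hAB⟩ := hfQirr.coprime_iff_not_dvd.2 hndvd
  have hz0 : ∀ n : ℤ, zq n = 0 := by
    have hone : (Polynomial.aeval S (A * fQ + B * Xp)) zq = zq := by
      rw [hAB]
      simp only [map_one]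
      rfl
    rw [map_add, map_mul, map_mul] at hone
    have h1 : (Polynomial.aeval S A * Polynomial.aeval S fQ) zq
        = (Polynomial.aeval S A) ((Polynomial.aeval S fQ) zq) := rfl
    have h2 : (Polynomial.aeval S B * Polynomial.aeval S Xp) zq
        = (Polynomial.aeval S B) ((Polynomial.aeval S Xp) zq) := rfl
    rw [LinearMap.add_apply, h1, h2, hfz, hxz, map_zero, map_zero, add_zero] at hone
    intro n
    rw [← hone]
    rfl
  intro n hn
  have h1 : y n = y (idx n) :=
    Keq n (idx n) hn (le_trans (hidxle n) hqd) (dvd_sub_comm.1 (hidxdvd n))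
  have h2 := hz0 n
  simp only [hzqdef] at h2
  have : y (idx n) = 0 := by exact_mod_cast h2
  rw [h1, this]

variable {β : ℝ} {f : Polynomial ℤ}

lemma summable_geom_bound (hβ : 1 < β) (g : ℕ → ℤ) (C : ℤ) (hC : ∀ m, |g m| ≤ C) :
    Summable (fun m : ℕ => (g m : ℝ) * (β⁻¹)^(m+1)) := by
  have h0 : (0:ℝ) < β := lt_trans one_pos hβ
  have hr0 : (0:ℝ) ≤ β⁻¹ := by positivity
  have hr1 : β⁻¹ < 1 := inv_lt_one_of_one_lt₀ hβ
  apply Summable.of_abs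
  apply Summable.of_nonneg_of_le (fun k => abs_nonneg _) (fun k => ?_)
    (((summable_geometric_of_lt_one hr0 hr1).mul_left ((C:ℝ) * β⁻¹)))
  rw [abs_mul, abs_pow, abs_of_nonneg hr0, pow_succ]
  have h1 : |(g k : ℝ)| ≤ (C:ℝ) := by exact_mod_cast hC k
  have h2 : (0:ℝ) ≤ (β⁻¹)^k * β⁻¹ := by positivity
  have h3 := mul_le_mul_of_nonneg_right h1 h2
  nlinarith [h3]

lemma series_zero (hβ : 1 < β)
    (hroot : Polynomial.aeval β f = 0) (y : ℤ → ℤ) (C : ℤ) (hC : ∀ n, |y n| ≤ C)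
    (hy0 : ∀ n : ℤ, n ≤ (f.natDegree : ℤ) - 1 → y n = 0)
    (c : ℤ → ℤ)
    (hc : ∀ n : ℤ, c n = ∑ k ∈ Finset.range (f.natDegree + 1), f.coeff k * y (n + (k:ℤ))) :
    ∑' n : ℕ, (c (n:ℤ) : ℝ) * (β⁻¹)^(n+1) = 0 := by
  set d := f.natDegree with hd
  have h0 : (0:ℝ) < β := lt_trans one_pos hβ
  have hbne : β ≠ 0 := ne_of_gt h0
  set Y : ℕ → ℝ := fun m => (y (m:ℤ) : ℝ) * (β⁻¹)^(m+1) with hYdef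
  have hYs : Summable Y := summable_geom_bound hβ (fun m => y (m:ℤ)) C (fun m => hC _)
  -- termwise rewriting
  have hterm : ∀ n : ℕ, (c (n:ℤ) : ℝ) * (β⁻¹)^(n+1)
      = ∑ k ∈ Finset.range (d+1), ((f.coeff k : ℝ) * β^k) * Y (n + k) := by
    intro n
    rw [hc (n:ℤ)]
    push_cast
    rw [Finset.sum_mul]
    apply Finset.sum_congr rfl
    intro k _
    have hYnk : Y (n + k) = (y ((n:ℤ) + (k:ℤ)) : ℝ) * (β⁻¹)^(n+k+1) := by
      rw [hYdef]
      push_cast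
      ring_nf
    rw [hYnk]
    have hpow : (β:ℝ)^k * (β⁻¹)^(n+k+1) = (β⁻¹)^(n+1) := by
      rw [show n+k+1 = (n+1)+k by ring, pow_add, ← mul_assoc, mul_comm ((β:ℝ)^k) _, mul_assoc,
        ← mul_pow, mul_inv_cancel₀ hbne, one_pow, mul_one]
    calc (f.coeff k : ℝ) * (y ((n:ℤ) + (k:ℤ)) : ℝ) * (β⁻¹)^(n+1)
        = (f.coeff k : ℝ) * ((y ((n:ℤ) + (k:ℤ)) : ℝ) * ((β:ℝ)^k * (β⁻¹)^(n+k+1))) := by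
          rw [hpow]; ring
      _ = (f.coeff k : ℝ) * β^k * ((y ((n:ℤ) + (k:ℤ)) : ℝ) * (β⁻¹)^(n+k+1)) := by ring
  have hsummand : ∀ k ∈ Finset.range (d+1),
      Summable (fun n : ℕ => ((f.coeff k : ℝ) * β^k) * Y (n + k)) := by
    intro k _
    exact (((summable_nat_add_iff k).2 hYs).mul_left _)
  rw [tsum_congr hterm, Summable.tsum_finsetSum hsummand]
  -- each inner tsum equals tsum Y
  have hinner : ∀ k ∈ Finset.range (d+1),
      ∑' n : ℕ, ((f.coeff k : ℝ) * β^k) * Y (n + k) = ((f.coeff k : ℝ) * β^k) * ∑' m : ℕ, Y m := by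
    intro k hk
    have hk' := Finset.mem_range.1 hk
    rw [tsum_mul_left]
    congr 1
    have hsplit := Summable.sum_add_tsum_nat_add k hYs
    have hzero : ∑ i ∈ Finset.range k, Y i = 0 := by
      apply Finset.sum_eq_zero
      intro i hi
      have hi' := Finset.mem_range.1 hi
      have : y (i:ℤ) = 0 := hy0 (i:ℤ) (by push_cast; omega)
      rw [hYdef]
      simp [this]
    rw [← hsplit, hzero, zero_add]
  rw [Finset.sum_congr rfl hinner, ← Finset.sum_mul]
  have hfbeta : ∑ k ∈ Finset.range (d+1), (f.coeff k : ℝ) * β^k = 0 := by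
    have := Polynomial.aeval_eq_sum_range (R := ℤ) (p := f) β
    rw [hroot] at this
    rw [← hd] at this
    have h2 : ∑ i ∈ Finset.range (d+1), f.coeff i • β^i
        = ∑ k ∈ Finset.range (d+1), (f.coeff k : ℝ) * β^k := by
      apply Finset.sum_congr rfl
      intro k _
      rw [zsmul_eq_mul]
    rw [← h2, ← this]
  rw [hfbeta, zero_mul]


lemma plusPart_mem {β : ℝ} {v : ℤ → ℤ} (hv : v ∈ Vbeta β) : plusPart v ∈ VbetaPlus β := by
  have h := hv 0
  have heq : (fun k : ℕ => v ((0:ℤ) + (k:ℤ) + 1)) = plusPart v := by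
    funext k; simp [plusPart]
  rwa [heq] at h

lemma Vbeta_digit_bound {β : ℝ} (hβ : 1 < β) {v : ℤ → ℤ} (hv : v ∈ Vbeta β) (n : ℤ) :
    |v n| ≤ ⌈β⌉ - 1 := by
  have h := hv (n - 1)
  have hb := VbetaPlus_abs_bound hβ h 0
  have : n - 1 + ((0:ℕ):ℤ) + 1 = n := by simp
  rwa [this] at hb

lemma Vbeta_shift {β : ℝ} {v : ℤ → ℤ} (hv : v ∈ Vbeta β) (t : ℤ) :
    (fun n => v (n + t)) ∈ Vbeta β := by
  intro n
  have h := hv (n + t)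
  have heq : (fun k : ℕ => v (n + t + (k:ℤ) + 1)) = (fun k : ℕ => v ((n + (k:ℤ) + 1) + t)) := by
    funext k; congr 1; ring
  rwa [heq] at h

lemma bsval_zero_digits {β : ℝ} (hβ : 1 < β) {e : ℕ → ℤ} (he : e ∈ VbetaPlus β)
    (h0 : bsval β e = 0) (k : ℕ) : e k = 0 := by
  have h0' : (0:ℝ) < β := lt_trans one_pos hβ
  have hsumm := VbetaPlus_summable hβ he
  have hnn : ∀ j : ℕ, 0 ≤ ((e j : ℝ)) * (β⁻¹)^(j+1) := by
    intro j
    have := (VbetaPlus_digit_bounds hβ he j).1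
    have : (0:ℝ) ≤ (e j : ℝ) := by exact_mod_cast this
    positivity
  have hterm : ((e k : ℝ)) * (β⁻¹)^(k+1) ≤ 0 := by
    have := Summable.le_tsum hsumm k fun m _ => hnn m
    rw [show (∑' j : ℕ, ((e j : ℝ)) * (β⁻¹)^(j+1)) = bsval β e from rfl, h0] at this
    exact this
  have hz : ((e k : ℝ)) * (β⁻¹)^(k+1) = 0 := le_antisymm hterm (hnn k)
  have hrp : (0:ℝ) < (β⁻¹)^(k+1) := by positivity
  rcases mul_eq_zero.1 hz with h | h
  · exact_mod_cast h
  · exact absurd h (ne_of_gt hrp)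

set_option maxHeartbeats 1000000 in
lemma main_lemma (β : ℝ) (hβ : 1 < β) (f : Polynomial ℤ) (hirr : Irreducible f)
    (hroot : Polynomial.aeval β f = 0) (estar : ℕ → ℤ)
    (hestar : estar ∈ VbetaPlus β ∧ ∀ e ∈ VbetaPlus β, e = estar ∨ lexLt e estar)
    (v w : ℤ → ℤ) (hv : v ∈ Vbeta β) (hw : w ∈ Vbeta β)
    (hagree : ∀ n : ℤ, n < 0 → v n = w n) (hlt : w 0 < v 0)
    (hy : ∃ y : ℤ → ℤ, (∃ C : ℤ, ∀ n : ℤ, |y n| ≤ C) ∧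
      ∀ n : ℤ, w n - v n = ∑ k ∈ Finset.range (f.natDegree + 1), f.coeff k * y (n + (k:ℤ))) :
    v 0 = w 0 + 1 ∧ plusPart v = 0 ∧ plusPart w = estar ∧ bsval β estar = 1 := by
  obtain ⟨y, ⟨C, hC⟩, hyeq⟩ := hy
  have h0 : (0:ℝ) < β := lt_trans one_pos hβ
  have hrne : (β⁻¹ : ℝ) ≠ 0 := by positivity
  have hrec : ∀ n : ℤ, n < 0 →
      ∑ k ∈ Finset.range (f.natDegree + 1), f.coeff k * y (n + (k:ℤ)) = 0 := by
    intro n hn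
    rw [← hyeq n, hagree n hn, sub_self]
  have hy0 := y_vanish hβ hirr hroot y C hC hrec
  set c : ℤ → ℤ := fun n => w n - v n with hcdef
  have hS : ∑' n : ℕ, (c (n:ℤ) : ℝ) * (β⁻¹)^(n+1) = 0 :=
    series_zero hβ hroot y C hC hy0 c (fun n => hyeq n)
  have hvP : plusPart v ∈ VbetaPlus β := plusPart_mem hv
  have hwP : plusPart w ∈ VbetaPlus β := plusPart_mem hw
  have hsumv := VbetaPlus_summable hβ hvP
  have hsumw := VbetaPlus_summable hβ hwP
  have hcbound : ∀ n : ℤ, |c n| ≤ 2 * (⌈β⌉ - 1) := by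
    intro n
    have h1 := Vbeta_digit_bound hβ hw n
    have h2 := Vbeta_digit_bound hβ hv n
    calc |c n| = |w n - v n| := rfl
      _ ≤ |w n| + |v n| := abs_sub _ _
      _ ≤ 2 * (⌈β⌉ - 1) := by omega
  have hcsummable : Summable (fun n : ℕ => (c ((n:ℕ):ℤ) : ℝ) * (β⁻¹)^(n+1)) :=
    summable_geom_bound hβ (fun m => c (m:ℤ)) (2 * (⌈β⌉ - 1)) (fun m => hcbound _)
  have hsplit := Summable.sum_add_tsum_nat_add 1 hcsummable
  rw [hS] at hsplit
  set V := bsval β (plusPart v) with hVdef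
  set W := bsval β (plusPart w) with hWdef
  have htail : ∀ n : ℕ, (c (((n+1:ℕ)):ℤ) : ℝ) * (β⁻¹)^((n+1)+1)
      = β⁻¹ * (((plusPart w n : ℝ) * (β⁻¹)^(n+1)) - ((plusPart v n : ℝ) * (β⁻¹)^(n+1))) := by
    intro n
    have hc1 : c (((n+1:ℕ)):ℤ) = plusPart w n - plusPart v n := by
      show w (((n+1:ℕ)):ℤ) - v (((n+1:ℕ)):ℤ) = w ((n:ℤ) + 1) - v ((n:ℤ) + 1)
      push_cast
      ring_nf
    rw [hc1]
    push_cast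
    ring
  have htsum_tail : ∑' n : ℕ, (c (((n+1:ℕ)):ℤ) : ℝ) * (β⁻¹)^((n+1)+1)
      = β⁻¹ * (W - V) := by
    rw [tsum_congr htail, tsum_mul_left]
    congr 1
    rw [Summable.tsum_sub hsumw hsumv]
    rfl
  rw [htsum_tail] at hsplit
  have hc0 : ∑ i ∈ Finset.range 1, (c ((i:ℕ):ℤ) : ℝ) * (β⁻¹)^(i+1) = (c 0 : ℝ) * β⁻¹ := by
    rw [Finset.sum_range_one]
    norm_num
  rw [hc0] at hsplit
  -- hsplit : (c 0) * β⁻¹ + β⁻¹ * (W - V) = 0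
  have hkey : ((v 0 : ℝ)) - w 0 = W - V := by
    have hfac : β⁻¹ * (((c 0 : ℝ)) + (W - V)) = 0 := by
      rw [mul_add]
      rw [mul_comm (β⁻¹) ((c 0 : ℝ))]
      exact hsplit
    have := (mul_eq_zero.1 hfac).resolve_left hrne
    have hc0' : (c 0 : ℝ) = (w 0 : ℝ) - v 0 := by
      show ((w 0 - v 0 : ℤ) : ℝ) = (w 0 : ℝ) - v 0
      push_cast; ring
    rw [hc0'] at this
    linarith
  have hV0 : 0 ≤ V := bsval_nonneg hβ hvP
  have hV1 : V ≤ 1 := bsval_le_one hβ hvP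
  have hW0 : 0 ≤ W := bsval_nonneg hβ hwP
  have hW1 : W ≤ 1 := bsval_le_one hβ hwP
  have hge : (1:ℝ) ≤ (v 0 : ℝ) - w 0 := by
    have : w 0 + 1 ≤ v 0 := hlt
    have : ((w 0 : ℝ)) + 1 ≤ (v 0 : ℝ) := by exact_mod_cast this
    linarith
  have hone : ((v 0 : ℝ)) - w 0 = 1 := by linarith
  have hW : W = 1 := by linarith
  have hV : V = 0 := by linarith
  refine ⟨?_, ?_, ?_, ?_⟩
  · have : ((v 0 : ℝ)) = ((w 0 + 1 : ℤ) : ℝ) := by push_cast; linarith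
    exact_mod_cast this
  · funext k
    exact bsval_zero_digits hβ hvP hV k
  · have hE1 : bsval β estar ≤ 1 := bsval_le_one hβ hestar.1
    have hE2 : W ≤ bsval β estar := bsval_le_max hβ hestar hwP
    have hE : bsval β estar = 1 := by linarith
    exact value_one_unique hβ hwP hestar.1 hW hE
  · have hE1 : bsval β estar ≤ 1 := bsval_le_one hβ hestar.1
    have hE2 : W ≤ bsval β estar := bsval_le_max hβ hestar hwP
    linarith

set_option maxHeartbeats 1000000 in
/-- for an algebraic `β > 1` with minimal polynomial `f`: if `v, w ∈ V_β`,
`v_n = w_n` for `n < 0`, `v₀ > w₀` and `w − v ∈ f(σ̄)(ℓ^∞(ℤ,ℤ))`, then `v₀ = w₀ + 1`,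
`v⁺ = 0` and `w⁺ = e_β^*`.  Consequently `(v + f(σ̄)(ℓ¹(ℤ,ℤ))) ∩ V_β = {v}` for every
`v ∈ V_β`. -/
theorem beta_shift_rigidity
    (β : ℝ) (hβ : 1 < β)
    (f : Polynomial ℤ) (hirr : Irreducible f) (hlead : 0 < f.leadingCoeff)
    (hroot : Polynomial.aeval β f = 0)
    (estar : ℕ → ℤ)
    (hestar : estar ∈ VbetaPlus β ∧ ∀ e ∈ VbetaPlus β, e = estar ∨ lexLt e estar) :
    (∀ v w : ℤ → ℤ, v ∈ Vbeta β → w ∈ Vbeta β →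
      (∀ n : ℤ, n < 0 → v n = w n) → w 0 < v 0 →
      (∃ y : ℤ → ℤ, (∃ C : ℤ, ∀ n : ℤ, |y n| ≤ C) ∧
        ∀ n : ℤ, w n - v n = ∑ k ∈ Finset.range (f.natDegree + 1),
          f.coeff k * y (n + (k : ℤ))) →
      (v 0 = w 0 + 1 ∧ plusPart v = 0 ∧ plusPart w = estar)) ∧
    (∀ v : ℤ → ℤ, v ∈ Vbeta β →
      {u : ℤ → ℤ | u ∈ Vbeta β ∧ ∃ y : ℤ → ℤ, {n : ℤ | y n ≠ 0}.Finite ∧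
        ∀ n : ℤ, u n = v n + ∑ k ∈ Finset.range (f.natDegree + 1),
          f.coeff k * y (n + (k : ℤ))} = {v}) := by
  constructor
  · intro v w hv hw hagree hlt hy
    obtain ⟨h1, h2, h3, _⟩ := main_lemma β hβ f hirr hroot estar hestar v w hv hw hagree hlt hy
    exact ⟨h1, h2, h3⟩
  · intro v hv
    ext u
    simp only [Set.mem_setOf_eq, Set.mem_singleton_iff]
    constructor
    · rintro ⟨hu, y, hyfin, hyeq⟩
      by_contra hne
      set d := f.natDegree with hd
      have hcy : ∀ n : ℤ, u n - v n = ∑ k ∈ Finset.range (d+1), f.coeff k * y (n + (k:ℤ)) :=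
        fun n => by rw [hyeq n]; ring
      have hFfin : {n : ℤ | u n ≠ v n}.Finite := by
        apply Set.Finite.subset (Set.Finite.biUnion (Finset.range (d+1)).finite_toSet
          (fun k _ => hyfin.image (fun mm => mm - (k:ℤ))))
        intro n hn
        simp only [Set.mem_setOf_eq] at hn
        by_contra hmem
        apply hn
        have hzero : ∀ k ∈ Finset.range (d+1), f.coeff k * y (n + (k:ℤ)) = 0 := by
          intro k hk
          have hy0 : y (n + (k:ℤ)) = 0 := by
            by_contra hy0
            exact hmem (Set.mem_biUnion (Finset.mem_coe.2 hk) ⟨n + (k:ℤ), hy0, by ring⟩)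
          rw [hy0, mul_zero]
        have hc := hcy n
        rw [Finset.sum_eq_zero hzero] at hc
        omega
      have hFne : hFfin.toFinset.Nonempty := by
        by_contra h
        rw [Finset.not_nonempty_iff_eq_empty] at h
        apply hne
        funext n
        by_contra hn
        have : n ∈ hFfin.toFinset := hFfin.mem_toFinset.2 hn
        simp [h] at this
      set m := hFfin.toFinset.min' hFne with hm
      set M := hFfin.toFinset.max' hFne with hM
      have hum : u m ≠ v m := hFfin.mem_toFinset.1 (hFfin.toFinset.min'_mem hFne)
      have hlow : ∀ n : ℤ, n < m → u n = v n := by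
        intro n hn
        by_contra h
        have := hFfin.toFinset.min'_le n (hFfin.mem_toFinset.2 h)
        omega
      have hhigh : ∀ n : ℤ, M < n → u n = v n := by
        intro n hn
        by_contra h
        have := hFfin.toFinset.le_max' n (hFfin.mem_toFinset.2 h)
        omega
      have hv2m : (fun n => v (n + m)) ∈ Vbeta β := Vbeta_shift hv m
      have hu2m : (fun n => u (n + m)) ∈ Vbeta β := Vbeta_shift hu m
      obtain ⟨Cb, hCb⟩ : ∃ Cb : ℤ, ∀ n : ℤ, |y n| ≤ Cb := by
        refine ⟨∑ s ∈ hyfin.toFinset, |y s|, fun n => ?_⟩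
        by_cases h : y n = 0
        · rw [h, abs_zero]
          exact Finset.sum_nonneg fun s _ => abs_nonneg _
        · exact Finset.single_le_sum (fun s _ => abs_nonneg (y s)) (hyfin.mem_toFinset.2 h)
      rcases lt_or_gt_of_ne hum with hlt2 | hgt2
      · -- u m < v m
        obtain ⟨h1, h2, h3, h4⟩ := main_lemma β hβ f hirr hroot estar hestar
          (fun n => v (n + m)) (fun n => u (n + m)) hv2m hu2m
          (fun n hn => (hlow (n + m) (by omega)).symm)
          (by simpa using hlt2)
          ⟨fun n => y (n + m), ⟨Cb, fun n => hCb _⟩, fun n => by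
            show u (n + m) - v (n + m) = _
            rw [hcy (n + m)]
            apply Finset.sum_congr rfl
            intro k _
            congr 2
            ring⟩
        have hz : ∀ k : ℕ, (M - m).toNat < k → estar k = 0 := by
          intro k hk
          have e1 : estar k = u ((k:ℤ) + 1 + m) := by rw [← h3]; rfl
          have e2 : u ((k:ℤ) + 1 + m) = v ((k:ℤ) + 1 + m) := hhigh _ (by omega)
          have e3 : v ((k:ℤ) + 1 + m) = 0 := by
            calc v ((k:ℤ) + 1 + m) = plusPart (fun n => v (n + m)) k := rfl
              _ = (0 : ℕ → ℤ) k := by rw [h2]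
              _ = 0 := rfl
          rw [e1, e2, e3]
        exact no_finite_one hβ hestar.1 ((M - m).toNat) hz h4
      · -- v m < u m
        obtain ⟨h1, h2, h3, h4⟩ := main_lemma β hβ f hirr hroot estar hestar
          (fun n => u (n + m)) (fun n => v (n + m)) hu2m hv2m
          (fun n hn => hlow (n + m) (by omega))
          (by simpa using hgt2)
          ⟨fun n => -y (n + m), ⟨Cb, fun n => by rw [abs_neg]; exact hCb _⟩, fun n => by
            show v (n + m) - u (n + m) = _
            have hc := hcy (n + m)
            have : v (n + m) - u (n + m)
                = -∑ k ∈ Finset.range (d+1), f.coeff k * y ((n + m) + (k:ℤ)) := by omega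
            rw [this, ← Finset.sum_neg_distrib]
            apply Finset.sum_congr rfl
            intro k _
            rw [show (n + m) + (k:ℤ) = (n + (k:ℤ)) + m by ring]
            ring⟩
        have hz : ∀ k : ℕ, (M - m).toNat < k → estar k = 0 := by
          intro k hk
          have e1 : estar k = v ((k:ℤ) + 1 + m) := by rw [← h3]; rfl
          have e2 : u ((k:ℤ) + 1 + m) = v ((k:ℤ) + 1 + m) := hhigh _ (by omega)
          have e3 : u ((k:ℤ) + 1 + m) = 0 := by
            calc u ((k:ℤ) + 1 + m) = plusPart (fun n => u (n + m)) k := rfl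
              _ = (0 : ℕ → ℤ) k := by rw [h2]
              _ = 0 := rfl
          rw [e1, ← e2, e3]
        exact no_finite_one hβ hestar.1 ((M - m).toNat) hz h4
    · rintro rfl
      refine ⟨hv, 0, ?_, fun n => ?_⟩
      · simp
      · simp
end

section
/- Let β > 1 and let V_β be the two-sided beta-shift space with shift σ̄. Then the homoclinic equivalence class of the zero sequence 𝟎 ∈ V_β is dense in V_β; in particular the homoclinic equivalence relation of σ̄ on V_β is topologically transitive. (Here two points of V_β are homoclinic if and only if they agree in all but finitely many coordinates.) -/
open Filter Topology

private lemma iter_mem (β : ℝ) {x : ℝ} (h0 : 0 ≤ x) (h1 : x < 1) (n : ℕ) :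
    0 ≤ (Tbeta β)^[n] x ∧ (Tbeta β)^[n] x < 1 := by
  cases n with
  | zero => exact ⟨h0, h1⟩
  | succ n =>
    rw [Function.iterate_succ_apply']
    exact ⟨Int.fract_nonneg _, Int.fract_lt_one _⟩

private lemma ebeta_shift (β x : ℝ) (j k : ℕ) :
    ebeta β x (k + j) = ebeta β ((Tbeta β)^[j] x) k := by
  simp [ebeta, Function.iterate_add_apply]

private lemma iter_nonneg (β : ℝ) {z : ℝ} (hz : 0 ≤ z) (q : ℕ) :
    0 ≤ (Tbeta β)^[q] z := by
  cases q with
  | zero => exact hz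
  | succ q => rw [Function.iterate_succ_apply']; exact Int.fract_nonneg _

/-- growth bound: `T^[q] z ≤ β^q * z` for `z ≥ 0`. -/
private lemma iter_le (β : ℝ) (hβ : 1 < β) {z : ℝ} (hz : 0 ≤ z) (q : ℕ) :
    (Tbeta β)^[q] z ≤ β ^ q * z := by
  induction q with
  | zero => simp
  | succ q ih =>
    have hnn : 0 ≤ (Tbeta β)^[q] z := iter_nonneg β hz q
    have hb : 0 ≤ β * (Tbeta β)^[q] z := mul_nonneg (by linarith) hnn
    have hfl : (0 : ℝ) ≤ (⌊β * (Tbeta β)^[q] z⌋ : ℝ) := by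
      exact_mod_cast Int.floor_nonneg.2 hb
    have h1 : Tbeta β ((Tbeta β)^[q] z) ≤ β * (Tbeta β)^[q] z := by
      have h2 := Int.self_sub_floor (β * (Tbeta β)^[q] z)
      have heq : Tbeta β ((Tbeta β)^[q] z) = Int.fract (β * (Tbeta β)^[q] z) := rfl
      rw [heq]
      linarith [h2]
    rw [Function.iterate_succ_apply']
    calc Tbeta β ((Tbeta β)^[q] z) ≤ β * (Tbeta β)^[q] z := h1
      _ ≤ β * (β ^ q * z) := by
          exact mul_le_mul_of_nonneg_left ih (by linarith)
      _ = β ^ (q + 1) * z := by ring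

/-- prepend one zero digit -/
private lemma ebeta_div (β : ℝ) (hβ : 1 < β) {x : ℝ} (h0 : 0 ≤ x) (h1 : x < 1) :
    (0 ≤ x / β ∧ x / β < 1) ∧
      ∀ k, ebeta β (x / β) k = if k = 0 then 0 else ebeta β x (k - 1) := by
  have hb0 : (0 : ℝ) < β := by linarith
  have hmem : 0 ≤ x / β ∧ x / β < 1 := by
    constructor
    · positivity
    · rw [div_lt_one hb0]; linarith
  have hT : Tbeta β (x / β) = x := by
    unfold Tbeta
    rw [mul_div_cancel₀ _ hb0.ne', Int.fract_eq_self.2 ⟨h0, h1⟩]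
  refine ⟨hmem, fun k => ?_⟩
  cases k with
  | zero =>
    simp only [if_pos rfl, ebeta, Function.iterate_zero_apply]
    rw [mul_div_cancel₀ _ hb0.ne']
    exact Int.floor_eq_zero_iff.2 ⟨h0, h1⟩
  | succ k =>
    simp only [Nat.succ_ne_zero, if_false, Nat.add_sub_cancel]
    unfold ebeta
    rw [Function.iterate_succ_apply, hT]

/-- prepend `p` zero digits -/
private lemma ebeta_div_pow (β : ℝ) (hβ : 1 < β) {x : ℝ} (h0 : 0 ≤ x) (h1 : x < 1) (p : ℕ) :
    (0 ≤ x / β ^ p ∧ x / β ^ p < 1) ∧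
      ∀ k, ebeta β (x / β ^ p) k = if k < p then 0 else ebeta β x (k - p) := by
  induction p with
  | zero =>
    simp only [pow_zero, div_one]
    exact ⟨⟨h0, h1⟩, fun k => by simp⟩
  | succ p ih =>
    obtain ⟨⟨hm0, hm1⟩, hek⟩ := ih
    have hb0 : (0 : ℝ) < β := by linarith
    have hdiv : x / β ^ (p + 1) = (x / β ^ p) / β := by
      rw [div_div, pow_succ]
    obtain ⟨hmem', he'⟩ := ebeta_div β hβ hm0 hm1
    rw [hdiv]
    refine ⟨hmem', fun k => ?_⟩
    rw [he' k]
    cases k with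
    | zero => simp
    | succ k =>
      simp only [Nat.succ_ne_zero, if_false, Nat.add_sub_cancel, hek k]
      have h1 : k < p ↔ k + 1 < p + 1 := by omega
      by_cases hkp : k < p
      · rw [if_pos hkp, if_pos (by omega)]
      · rw [if_neg hkp, if_neg (by omega)]
        congr 1
        omega

/-- key computation used in the truncation lemma -/
private lemma key (β : ℝ) (hβ : 1 < β) {x : ℝ} (h0 : 0 ≤ x) (h1 : x < 1) (j q : ℕ) :
    β * ((Tbeta β)^[j] x - (Tbeta β)^[j + (q + 1)] x / β ^ (q + 1))
        = (⌊β * (Tbeta β)^[j] x⌋ : ℝ) +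
          ((Tbeta β)^[j + 1] x - (Tbeta β)^[j + (q + 1)] x / β ^ q) ∧
      0 ≤ (Tbeta β)^[j + 1] x - (Tbeta β)^[j + (q + 1)] x / β ^ q ∧
      (Tbeta β)^[j + 1] x - (Tbeta β)^[j + (q + 1)] x / β ^ q < 1 := by
  have hb0 : (0 : ℝ) < β := by linarith
  have hq0 : (0 : ℝ) < β ^ q := pow_pos hb0 q
  have hj1 := iter_mem β h0 h1 (j + 1)
  have hjq := iter_mem β h0 h1 (j + (q + 1))
  have hsplit : (Tbeta β)^[j + (q + 1)] x = (Tbeta β)^[q] ((Tbeta β)^[j + 1] x) := by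
    rw [show j + (q + 1) = q + (j + 1) by omega, Function.iterate_add_apply]
  have hle : (Tbeta β)^[j + (q + 1)] x ≤ β ^ q * (Tbeta β)^[j + 1] x := by
    rw [hsplit]; exact iter_le β hβ hj1.1 q
  have ht0 : 0 ≤ (Tbeta β)^[j + 1] x - (Tbeta β)^[j + (q + 1)] x / β ^ q := by
    rw [sub_nonneg, div_le_iff₀ hq0]
    linarith [hle]
  have ht1 : (Tbeta β)^[j + 1] x - (Tbeta β)^[j + (q + 1)] x / β ^ q < 1 := by
    have : 0 ≤ (Tbeta β)^[j + (q + 1)] x / β ^ q := div_nonneg hjq.1 hq0.le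
    linarith [hj1.2]
  refine ⟨?_, ht0, ht1⟩
  have hfr : (Tbeta β)^[j + 1] x = β * (Tbeta β)^[j] x - (⌊β * (Tbeta β)^[j] x⌋ : ℝ) := by
    rw [Function.iterate_succ_apply']
    unfold Tbeta
    exact (Int.self_sub_floor _).symm
  have hpow : β * ((Tbeta β)^[j + (q + 1)] x / β ^ (q + 1))
      = (Tbeta β)^[j + (q + 1)] x / β ^ q := by
    rw [pow_succ]
    field_simp
  rw [mul_sub, hpow, hfr]
  ring

/-- Truncation lemma: zeroing out the digits of a beta-expansion after position `m`
gives a beta-expansion. -/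
private lemma truncate (β : ℝ) (hβ : 1 < β) {x : ℝ} (h0 : 0 ≤ x) (h1 : x < 1) (m : ℕ) :
    ∃ y, 0 ≤ y ∧ y < 1 ∧ ∀ k, ebeta β y k = if k < m then ebeta β x k else 0 := by
  have hb0 : (0 : ℝ) < β := by linarith
  set y : ℝ := x - (Tbeta β)^[m] x / β ^ m with hy
  have hm := iter_mem β h0 h1 m
  have claim : ∀ j q : ℕ, j + q = m →
      (Tbeta β)^[j] y = (Tbeta β)^[j] x - (Tbeta β)^[m] x / β ^ q := by
    intro j
    induction j with
    | zero =>
      intro q hq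
      obtain rfl : q = m := by omega
      simpa using hy
    | succ j ih =>
      intro q hq
      have hq' : j + (q + 1) = m := by omega
      have ihj := ih (q + 1) hq'
      obtain ⟨hkey, ht0, ht1⟩ := key β hβ h0 h1 j q
      rw [Function.iterate_succ_apply']
      show Int.fract (β * (Tbeta β)^[j] y) = _
      rw [ihj, show m = j + (q + 1) by omega, hkey, Int.fract_intCast_add,
        Int.fract_eq_self.2 ⟨ht0, ht1⟩]
  have hy0 : 0 ≤ y := by
    have := iter_le β hβ h0 m
    have hq0 : (0 : ℝ) < β ^ m := pow_pos hb0 m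
    rw [hy, sub_nonneg, div_le_iff₀ hq0]
    linarith [this]
  have hy1 : y < 1 := by
    have hq0 : (0 : ℝ) < β ^ m := pow_pos hb0 m
    have : 0 ≤ (Tbeta β)^[m] x / β ^ m := div_nonneg hm.1 hq0.le
    rw [hy]; linarith
  refine ⟨y, hy0, hy1, fun k => ?_⟩
  by_cases hk : k < m
  · rw [if_pos hk]
    obtain ⟨q, hq⟩ : ∃ q, k + (q + 1) = m := ⟨m - k - 1, by omega⟩
    obtain ⟨hkey, ht0, ht1⟩ := key β hβ h0 h1 k q
    unfold ebeta
    rw [claim k (q + 1) hq, show m = k + (q + 1) by omega, hkey, Int.floor_intCast_add]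
    rw [Int.floor_eq_zero_iff.2 ⟨ht0, ht1⟩, add_zero]
  · rw [if_neg hk]
    have hmy : (Tbeta β)^[m] y = 0 := by
      rw [claim m 0 (by omega), pow_zero, div_one, sub_self]
    have hzero : ∀ i, (Tbeta β)^[m + i] y = 0 := by
      intro i
      induction i with
      | zero => simpa using hmy
      | succ i ih =>
        rw [show m + (i + 1) = (m + i) + 1 by omega, Function.iterate_succ_apply', ih]
        unfold Tbeta
        simp
    obtain ⟨i, hi⟩ : ∃ i, k = m + i := ⟨k - m, by omega⟩
    unfold ebeta
    rw [hi, hzero i]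
    simp

private lemma zero_ebeta (β : ℝ) : ebeta β 0 = fun _ => 0 := by
  have hiter : ∀ n, (Tbeta β)^[n] (0 : ℝ) = 0 := by
    intro n
    induction n with
    | zero => rfl
    | succ n ih =>
      rw [Function.iterate_succ_apply', ih]
      unfold Tbeta
      simp
  funext n
  unfold ebeta
  rw [hiter n]
  simp

/-- extract a good approximant in the one-sided shift from closure membership -/
private lemma closure_extract {A : Set (ℕ → ℤ)} {u : ℕ → ℤ} (hu : u ∈ closure A) (M : ℕ) :
    ∃ e ∈ A, ∀ k ≤ M, e k = u k := by
  have hopen : IsOpen {e : ℕ → ℤ | ∀ k ≤ M, e k = u k} := by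
    have hset : {e : ℕ → ℤ | ∀ k ≤ M, e k = u k}
        = ⋂ k ∈ Finset.range (M + 1), (fun e : ℕ → ℤ => e k) ⁻¹' {u k} := by
      ext e
      simp [Nat.lt_succ_iff]
    rw [hset]
    exact isOpen_biInter_finset fun k _ =>
      (continuous_apply k).isOpen_preimage _ (isOpen_discrete _)
  obtain ⟨e, he1, he2⟩ := mem_closure_iff.1 hu _ hopen (fun k _ => rfl)
  exact ⟨e, he2, he1⟩

/-- the finitely supported approximation of a point of `Vbeta` -/
private lemma approx (β : ℝ) (hβ : 1 < β) {v : ℤ → ℤ} (hv : v ∈ Vbeta β) (N : ℕ) :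
    ∃ w : ℤ → ℤ, w ∈ Vbeta β ∧ {n : ℤ | w n ≠ 0}.Finite ∧
      ∀ i : ℤ, |i| ≤ (N : ℤ) → w i = v i := by
  have hb0 : (0 : ℝ) < β := by linarith
  have hu := hv (-(N : ℤ) - 1)
  obtain ⟨e, ⟨x, hx0, hx1, hex⟩, hee⟩ := closure_extract hu (2 * N)
  subst hex
  obtain ⟨y, hy0, hy1, hy⟩ := truncate β hβ hx0 hx1 (2 * N + 1)
  set w : ℤ → ℤ := fun i => if -(N : ℤ) ≤ i then ebeta β y (i + N).toNat else 0 with hw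
  have hwv : ∀ i : ℤ, |i| ≤ (N : ℤ) → w i = v i := by
    intro i hi
    rw [abs_le] at hi
    have hiN : -(N : ℤ) ≤ i := hi.1
    have htn : ((i + N).toNat : ℤ) = i + N := Int.toNat_of_nonneg (by omega)
    have hlt : (i + N).toNat < 2 * N + 1 := by omega
    have hle : (i + N).toNat ≤ 2 * N := by omega
    rw [hw]
    simp only [if_pos hiN]
    rw [hy, if_pos hlt, hee _ hle]
    congr 1
    omega
  have hfin : {n : ℤ | w n ≠ 0}.Finite := by
    apply Set.Finite.subset (Set.finite_Icc (-(N : ℤ)) (N : ℤ))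
    intro i hi
    simp only [Set.mem_setOf_eq, hw] at hi
    by_cases hiN : -(N : ℤ) ≤ i
    · rw [if_pos hiN] at hi
      have : (i + N).toNat < 2 * N + 1 := by
        by_contra hcon
        push_neg at hcon
        rw [hy, if_neg (by omega)] at hi
        exact hi rfl
      constructor <;> omega
    · rw [if_neg hiN] at hi; exact absurd rfl hi
  refine ⟨w, ?_, hfin, hwv⟩
  intro n
  by_cases hn : 0 ≤ n + 1 + N
  · -- tail is a shift of `ebeta β y`
    set j := (n + 1 + N).toNat with hj
    have hz := iter_mem β hy0 hy1 j
    apply subset_closure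
    refine ⟨(Tbeta β)^[j] y, hz.1, hz.2, ?_⟩
    funext k
    have hge : -(N : ℤ) ≤ n + k + 1 := by omega
    rw [hw]
    simp only [if_pos hge]
    rw [show (n + (k : ℤ) + 1 + N).toNat = k + j by omega, ebeta_shift]
  · -- tail is `ebeta β y` prefixed with zeros
    push_neg at hn
    set p := (-(N : ℤ) - (n + 1)).toNat with hp
    obtain ⟨⟨hz0, hz1⟩, hze⟩ := ebeta_div_pow β hβ hy0 hy1 p
    apply subset_closure
    refine ⟨y / β ^ p, hz0, hz1, ?_⟩
    have hpz : (p : ℤ) = -(N : ℤ) - (n + 1) := by omega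
    funext k
    rw [hze k]
    simp only [hw]
    by_cases hkp : k < p
    · rw [if_pos hkp, if_neg (by omega)]
    · rw [if_neg hkp, if_pos (by omega)]
      congr 1
      omega

/-- the homoclinic equivalence class of the zero sequence (i.e., the set of
points of `V_β` which agree with `0` in all but finitely many coordinates) is dense in `V_β`;
in particular the homoclinic relation of the shift on `V_β` is topologically transitive. -/
theorem beta_shift_homoclinic_class_of_zero_dense
    (β : ℝ) (hβ : 1 < β) :
    (0 : ℤ → ℤ) ∈ Vbeta β ∧
    Vbeta β ⊆ closure {w : ℤ → ℤ | w ∈ Vbeta β ∧ {n : ℤ | w n ≠ 0}.Finite} := by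
  constructor
  · intro n
    apply subset_closure
    exact ⟨0, le_refl 0, zero_lt_one, by rw [zero_ebeta]; rfl⟩
  · intro v hv
    choose w hw1 hw2 hw3 using fun N => approx β hβ hv N
    apply mem_closure_of_tendsto (f := w) (b := atTop)
    · rw [tendsto_pi_nhds]
      intro i
      apply Tendsto.congr' (f₁ := fun _ => v i) _ tendsto_const_nhds
      filter_upwards [eventually_ge_atTop i.natAbs] with N hN
      exact (hw3 N i (by rw [Int.abs_eq_natAbs]; exact_mod_cast hN)).symm
    · filter_upwards with N
      exact ⟨hw1 N, hw2 N⟩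
end

section
/- Let β be a Salem number with minimal polynomial f ∈ R₁, and let V_β be the two-sided beta-shift space. Then the set R = {(v, v') ∈ V_β × V_β : v − v' ∈ f(σ̄*)(ℓ*(ℤ,ℤ))} is a Borel subset of V_β × V_β (with the product topology) and is invariant under σ̄ × σ̄. -/
open Filter Topology

/-- `ℓ*(ℤ,ℤ)`: integer sequences growing at most linearly. -/
def lStarZ : Set (ℤ → ℤ) :=
  {y | ∃ C : ℝ, ∀ n : ℤ, (|y n| : ℝ) ≤ C * (|(n : ℝ)| + 1)}

/-! ### Auxiliary machinery: solving the linear recurrence `f(σ*) y = d` -/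

/-- Forward solution of the recurrence: `fwdSeq N c a d m` is `y m` where `y` is the unique
solution of `d n = ∑_{k ≤ N} c k · y (n + k)` (with `c N = 1`) having initial data `a`. -/
def fwdSeq (N : ℕ) (c : ℕ → ℤ) (a : Fin N → ℤ) (d : ℤ → ℤ) : ℕ → ℤ
  | m =>
    if h : m < N then a ⟨m, h⟩
    else d ((m : ℤ) - (N : ℤ)) -
      ∑ k ∈ (Finset.range N).attach,
        c k.1 * fwdSeq N c a d (m - N + k.1)
  decreasing_by
    have hk := k.2
    simp only [Finset.mem_range] at hk
    omega

/-- Backward solution: `bwdSeq N c a d m` is `y (-(m+1))` (uses `c 0 = 1`). -/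
def bwdSeq (N : ℕ) (c : ℕ → ℤ) (a : Fin N → ℤ) (d : ℤ → ℤ) : ℕ → ℤ
  | m =>
    d (-((m : ℤ) + 1)) -
      ∑ k ∈ (Finset.Icc 1 N).attach,
        c k.1 * (if _h : k.1 ≤ m then bwdSeq N c a d (m - k.1)
                 else fwdSeq N c a d (k.1 - (m + 1)))
  decreasing_by
    have hk := k.2
    simp only [Finset.mem_Icc] at hk
    omega

/-- The two-sided solution of the recurrence. -/
def Ysol (N : ℕ) (c : ℕ → ℤ) (a : Fin N → ℤ) (d : ℤ → ℤ) : ℤ → ℤ := fun n =>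
  if 0 ≤ n then fwdSeq N c a d n.toNat else bwdSeq N c a d (-(n+1)).toNat

lemma range_split (N : ℕ) : Finset.range (N + 1) = insert 0 (Finset.Icc 1 N) := by
  ext x; simp only [Finset.mem_range, Finset.mem_insert, Finset.mem_Icc]; omega

lemma fwdSeq_ge (N : ℕ) (c : ℕ → ℤ) (a : Fin N → ℤ) (d : ℤ → ℤ) (m : ℕ) :
    fwdSeq N c a d (m + N) =
      d (m : ℤ) - ∑ k ∈ Finset.range N, c k * fwdSeq N c a d (m + k) := by
  rw [fwdSeq]
  rw [dif_neg (by omega)]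
  have h1 : ((m + N : ℕ) : ℤ) - (N : ℤ) = (m : ℤ) := by push_cast; ring
  rw [h1]
  congr 1
  rw [Finset.sum_attach (Finset.range N) (fun k => c k * fwdSeq N c a d (m + N - N + k))]
  apply Finset.sum_congr rfl
  intro k _
  congr 2
  omega

lemma sum_fwd (N : ℕ) (c : ℕ → ℤ) (a : Fin N → ℤ) (d : ℤ → ℤ) (hcN : c N = 1) (m : ℕ) :
    d (m : ℤ) = ∑ k ∈ Finset.range (N + 1), c k * fwdSeq N c a d (m + k) := by
  rw [Finset.sum_range_succ, hcN, one_mul, fwdSeq_ge]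
  ring

lemma Ysol_spec (N : ℕ) (c : ℕ → ℤ) (a : Fin N → ℤ) (d : ℤ → ℤ)
    (hc0 : c 0 = 1) (hcN : c N = 1) (n : ℤ) :
    d n = ∑ k ∈ Finset.range (N + 1), c k * Ysol N c a d (n + (k : ℤ)) := by
  rcases le_or_gt 0 n with hn | hn
  · have h1 : ∀ k ∈ Finset.range (N + 1),
        c k * Ysol N c a d (n + (k : ℤ)) = c k * fwdSeq N c a d (n.toNat + k) := by
      intro k _
      have hnk : (0:ℤ) ≤ n + k := by omega
      simp only [Ysol, if_pos hnk]
      congr 2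
      omega
    rw [Finset.sum_congr rfl h1]
    have h2 : d n = d ((n.toNat : ℕ) : ℤ) := by congr 1; omega
    rw [h2]
    exact sum_fwd N c a d hcN n.toNat
  · set m : ℕ := (-(n+1)).toNat with hm
    have hnm : n = -((m : ℤ) + 1) := by omega
    have hYn : Ysol N c a d n = bwdSeq N c a d m := by
      simp only [Ysol, if_neg (by omega : ¬ (0:ℤ) ≤ n)]
      rfl
    have hterm : ∀ k ∈ Finset.Icc 1 N,
        c k * Ysol N c a d (n + (k : ℤ)) =
        c k * (if _h : k ≤ m then bwdSeq N c a d (m - k)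
               else fwdSeq N c a d (k - (m + 1))) := by
      intro k hk
      simp only [Finset.mem_Icc] at hk
      by_cases hkm : k ≤ m
      · rw [dif_pos hkm]
        have : ¬ (0:ℤ) ≤ n + k := by omega
        simp only [Ysol, if_neg this]
        congr 2
        omega
      · rw [dif_neg hkm]
        have : (0:ℤ) ≤ n + k := by omega
        simp only [Ysol, if_pos this]
        congr 2
        omega
    rw [range_split, Finset.sum_insert (by simp), hc0, one_mul]
    simp only [Nat.cast_zero, add_zero]
    rw [hYn, Finset.sum_congr rfl hterm]
    rw [← Finset.sum_attach (Finset.Icc 1 N)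
      (fun k => c k * (if _h : k ≤ m then bwdSeq N c a d (m - k)
               else fwdSeq N c a d (k - (m + 1))))]
    rw [bwdSeq]
    have : d (-((m : ℤ) + 1)) = d n := by congr 1; omega
    rw [this]
    ring

lemma unique_fwd (N : ℕ) (c : ℕ → ℤ) (d : ℤ → ℤ) (hcN : c N = 1) (y : ℤ → ℤ)
    (hy : ∀ n : ℤ, d n = ∑ k ∈ Finset.range (N + 1), c k * y (n + (k : ℤ))) :
    ∀ m : ℕ, y (m : ℤ) = fwdSeq N c (fun i => y (i : ℤ)) d m := by
  intro m
  induction m using Nat.strong_induction_on with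
  | _ m ih =>
    rw [fwdSeq]
    by_cases h : m < N
    · rw [dif_pos h]
    · rw [dif_neg h]
      have hm := hy ((m : ℤ) - N)
      rw [Finset.sum_range_succ, hcN, one_mul] at hm
      have hN : (m : ℤ) - N + N = m := by ring
      rw [hN] at hm
      have : y (m : ℤ) = d ((m:ℤ) - N) - ∑ k ∈ Finset.range N, c k * y ((m:ℤ) - N + k) := by
        rw [hm]; ring
      rw [this]
      congr 1
      rw [Finset.sum_attach (Finset.range N)
        (fun k => c k * fwdSeq N c (fun i => y (i : ℤ)) d (m - N + k))]
      apply Finset.sum_congr rfl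
      intro k hk
      simp only [Finset.mem_range] at hk
      have h1 : (m : ℤ) - N + k = ((m - N + k : ℕ) : ℤ) := by omega
      rw [h1, ih (m - N + k) (by omega)]

lemma unique_bwd (N : ℕ) (c : ℕ → ℤ) (d : ℤ → ℤ) (hc0 : c 0 = 1) (hcN : c N = 1)
    (y : ℤ → ℤ)
    (hy : ∀ n : ℤ, d n = ∑ k ∈ Finset.range (N + 1), c k * y (n + (k : ℤ))) :
    ∀ m : ℕ, y (-((m : ℤ) + 1)) = bwdSeq N c (fun i => y (i : ℤ)) d m := by
  intro m
  induction m using Nat.strong_induction_on with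
  | _ m ih =>
    rw [bwdSeq]
    have hm := hy (-((m : ℤ) + 1))
    rw [range_split, Finset.sum_insert (by simp), hc0, one_mul] at hm
    simp only [Nat.cast_zero, add_zero] at hm
    have : y (-((m : ℤ) + 1)) = d (-((m : ℤ) + 1)) -
        ∑ k ∈ Finset.Icc 1 N, c k * y (-((m : ℤ) + 1) + k) := by
      rw [hm]; ring
    rw [this]
    congr 1
    rw [Finset.sum_attach (Finset.Icc 1 N)
      (fun k => c k * (if _h : k ≤ m then bwdSeq N c (fun i => y (i : ℤ)) d (m - k)
               else fwdSeq N c (fun i => y (i : ℤ)) d (k - (m + 1))))]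
    apply Finset.sum_congr rfl
    intro k hk
    simp only [Finset.mem_Icc] at hk
    by_cases hkm : k ≤ m
    · rw [dif_pos hkm, ← ih (m - k) (by omega)]
      congr 2
      omega
    · rw [dif_neg hkm, ← unique_fwd N c d hcN y hy (k - (m + 1))]
      congr 2
      omega

lemma Ysol_unique (N : ℕ) (c : ℕ → ℤ) (d : ℤ → ℤ) (hc0 : c 0 = 1) (hcN : c N = 1)
    (y : ℤ → ℤ)
    (hy : ∀ n : ℤ, d n = ∑ k ∈ Finset.range (N + 1), c k * y (n + (k : ℤ))) :
    y = Ysol N c (fun i => y (i : ℤ)) d := by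
  funext n
  rcases le_or_gt 0 n with hn | hn
  · simp only [Ysol, if_pos hn]
    rw [← unique_fwd N c d hcN y hy n.toNat]
    congr 1
    omega
  · simp only [Ysol, if_neg (by omega : ¬ (0:ℤ) ≤ n)]
    rw [← unique_bwd N c d hc0 hcN y hy (-(n+1)).toNat]
    congr 1
    omega

lemma meas_fwd (N : ℕ) (c : ℕ → ℤ) (a : Fin N → ℤ) (m : ℕ) :
    Measurable fun d : ℤ → ℤ => fwdSeq N c a d m := by
  induction m using Nat.strong_induction_on with
  | _ m ih =>
    have heq : (fun d : ℤ → ℤ => fwdSeq N c a d m) =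
        fun d => if h : m < N then a ⟨m, h⟩ else d ((m : ℤ) - (N : ℤ)) -
          ∑ k ∈ (Finset.range N).attach, c k.1 * fwdSeq N c a d (m - N + k.1) := by
      funext d; rw [fwdSeq]
    rw [heq]
    by_cases h : m < N
    · simp only [dif_pos h]; exact measurable_const
    · simp only [dif_neg h]
      apply Measurable.sub (measurable_pi_apply _)
      apply Finset.measurable_sum
      intro k _
      have hk := k.2
      simp only [Finset.mem_range] at hk
      exact (ih (m - N + k.1) (by omega)).const_mul _

lemma meas_bwd (N : ℕ) (c : ℕ → ℤ) (a : Fin N → ℤ) (m : ℕ) :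
    Measurable fun d : ℤ → ℤ => bwdSeq N c a d m := by
  induction m using Nat.strong_induction_on with
  | _ m ih =>
    have heq : (fun d : ℤ → ℤ => bwdSeq N c a d m) =
        fun d => d (-((m : ℤ) + 1)) -
          ∑ k ∈ (Finset.Icc 1 N).attach,
            c k.1 * (if _h : k.1 ≤ m then bwdSeq N c a d (m - k.1)
                     else fwdSeq N c a d (k.1 - (m + 1))) := by
      funext d; rw [bwdSeq]
    rw [heq]
    apply Measurable.sub (measurable_pi_apply _)
    apply Finset.measurable_sum
    intro k _
    have hk := k.2
    simp only [Finset.mem_Icc] at hk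
    by_cases hkm : k.1 ≤ m
    · simp only [dif_pos hkm]
      exact (ih (m - k.1) (by omega)).const_mul _
    · simp only [dif_neg hkm]
      exact (meas_fwd N c a _).const_mul _

lemma meas_Ysol (N : ℕ) (c : ℕ → ℤ) (a : Fin N → ℤ) (n : ℤ) :
    Measurable fun d : ℤ → ℤ => Ysol N c a d n := by
  simp only [Ysol]
  by_cases hn : 0 ≤ n
  · simp only [if_pos hn]; exact meas_fwd N c a _
  · simp only [if_neg hn]; exact meas_bwd N c a _

lemma Dset_eq (N : ℕ) (c : ℕ → ℤ) (hc0 : c 0 = 1) (hcN : c N = 1) :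
    {d : ℤ → ℤ | ∃ y ∈ lStarZ, ∀ n : ℤ,
        d n = ∑ k ∈ Finset.range (N + 1), c k * y (n + (k : ℤ))}
    = ⋃ (a : Fin N → ℤ), ⋃ (C : ℕ), ⋂ (n : ℤ),
        {d : ℤ → ℤ | (|Ysol N c a d n| : ℝ) ≤ (C : ℝ) * (|(n : ℝ)| + 1)} := by
  ext d
  simp only [Set.mem_setOf_eq, Set.mem_iUnion, Set.mem_iInter]
  constructor
  · rintro ⟨y, ⟨C, hC⟩, hy⟩
    refine ⟨fun i => y (i : ℤ), ⌈C⌉₊, fun n => ?_⟩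
    rw [← Ysol_unique N c d hc0 hcN y hy]
    exact (hC n).trans (mul_le_mul_of_nonneg_right (Nat.le_ceil C) (by positivity))
  · rintro ⟨a, C, hd⟩
    exact ⟨Ysol N c a d, ⟨(C : ℝ), hd⟩, Ysol_spec N c a d hc0 hcN⟩

lemma meas_Dset (N : ℕ) (c : ℕ → ℤ) (hc0 : c 0 = 1) (hcN : c N = 1) :
    MeasurableSet {d : ℤ → ℤ | ∃ y ∈ lStarZ, ∀ n : ℤ,
        d n = ∑ k ∈ Finset.range (N + 1), c k * y (n + (k : ℤ))} := by
  rw [Dset_eq N c hc0 hcN]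
  refine MeasurableSet.iUnion fun a => MeasurableSet.iUnion fun C =>
    MeasurableSet.iInter fun n => ?_
  have h : {d : ℤ → ℤ | (|Ysol N c a d n| : ℝ) ≤ (C : ℝ) * (|(n : ℝ)| + 1)} =
      (fun d => Ysol N c a d n) ⁻¹' {z : ℤ | (|z| : ℝ) ≤ (C : ℝ) * (|(n : ℝ)| + 1)} := rfl
  rw [h]
  exact meas_Ysol N c a n (Set.to_countable {z : ℤ | (|z| : ℝ) ≤ (C : ℝ) * (|(n : ℝ)| + 1)}).measurableSet

lemma meas_Vbeta (β : ℝ) : MeasurableSet (Vbeta β) := by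
  have h : Vbeta β = ⋂ n : ℤ,
      (fun v : ℤ → ℤ => fun k : ℕ => v (n + (k : ℤ) + 1)) ⁻¹' (VbetaPlus β) := by
    ext v
    simp only [Vbeta, Set.mem_setOf_eq, Set.mem_iInter, Set.mem_preimage]
  rw [h]
  refine MeasurableSet.iInter fun n => ?_
  exact (measurable_pi_lambda _ fun k => measurable_pi_apply _) isClosed_closure.measurableSet

lemma shift_Vbeta (β : ℝ) (v : ℤ → ℤ) :
    v ∈ Vbeta β ↔ (fun n => v (n + 1)) ∈ Vbeta β := by
  constructor
  · intro h n
    have h2 : (fun k : ℕ => v (n + (k : ℤ) + 1 + 1)) =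
        (fun k : ℕ => v ((n + 1) + (k : ℤ) + 1)) := by funext k; congr 1; ring
    simpa [h2] using h (n + 1)
  · intro h n
    have h2 : (fun k : ℕ => v ((n - 1) + (k : ℤ) + 1 + 1)) =
        (fun k : ℕ => v (n + (k : ℤ) + 1)) := by funext k; congr 1; ring
    have := h (n - 1)
    simp only [Set.mem_setOf_eq] at this ⊢
    rwa [h2] at this

lemma lStar_shift (y : ℤ → ℤ) (hy : y ∈ lStarZ) (j : ℤ) :
    (fun n => y (n + j)) ∈ lStarZ := by
  obtain ⟨C, hC⟩ := hy
  refine ⟨|C| * (|(j : ℝ)| + 1), fun n => ?_⟩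
  have h1 := hC (n + j)
  have h2 : (|y (n + j)| : ℝ) ≤ |C| * (|((n + j : ℤ) : ℝ)| + 1) := by
    refine h1.trans (mul_le_mul_of_nonneg_right (le_abs_self C) ?_)
    positivity
  refine h2.trans ?_
  have h3 : |((n + j : ℤ) : ℝ)| + 1 ≤ (|(j:ℝ)| + 1) * (|(n:ℝ)| + 1) := by
    push_cast
    have := abs_add_le (n : ℝ) (j : ℝ)
    have hn : (0:ℝ) ≤ |(n:ℝ)| := abs_nonneg _
    have hj : (0:ℝ) ≤ |(j:ℝ)| := abs_nonneg _
    nlinarith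
  calc |C| * (|((n + j : ℤ) : ℝ)| + 1) ≤ |C| * ((|(j:ℝ)| + 1) * (|(n:ℝ)| + 1)) :=
        mul_le_mul_of_nonneg_left h3 (abs_nonneg _)
    _ = |C| * (|(j:ℝ)| + 1) * (|(n:ℝ)| + 1) := by ring


/-- for a Salem number `β` with minimal polynomial `f`, the relation
`R = {(v,v') ∈ V_β × V_β : v − v' ∈ f(σ̄*)(ℓ*(ℤ,ℤ))}` is a Borel subset of `V_β × V_β`
invariant under `σ̄ × σ̄`. -/
theorem salem_equivalence_relation_borel_invariant
    (β : ℝ) (hβ : 1 < β)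
    (f : Polynomial ℤ) (hirr : Irreducible f) (hmonic : f.Monic) (hconst : f.coeff 0 = 1)
    (hroot : Polynomial.aeval β f = 0)
    (hconj : ∀ z : ℂ, Polynomial.aeval z f = 0 → z = (β : ℂ) ∨ ‖z‖ ≤ 1)
    (hsalem : ∃ z : ℂ, Polynomial.aeval z f = 0 ∧ ‖z‖ = 1) :
    MeasurableSet {p : (ℤ → ℤ) × (ℤ → ℤ) | p.1 ∈ Vbeta β ∧ p.2 ∈ Vbeta β ∧
      ∃ y ∈ lStarZ, ∀ n : ℤ, p.1 n - p.2 n = ∑ k ∈ Finset.range (f.natDegree + 1),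
        f.coeff k * y (n + (k : ℤ))} ∧
    (∀ v v' : ℤ → ℤ,
      ((v, v') ∈ {p : (ℤ → ℤ) × (ℤ → ℤ) | p.1 ∈ Vbeta β ∧ p.2 ∈ Vbeta β ∧
        ∃ y ∈ lStarZ, ∀ n : ℤ, p.1 n - p.2 n = ∑ k ∈ Finset.range (f.natDegree + 1),
          f.coeff k * y (n + (k : ℤ))} ↔
      ((fun n => v (n + 1)), (fun n => v' (n + 1))) ∈
        {p : (ℤ → ℤ) × (ℤ → ℤ) | p.1 ∈ Vbeta β ∧ p.2 ∈ Vbeta β ∧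
        ∃ y ∈ lStarZ, ∀ n : ℤ, p.1 n - p.2 n = ∑ k ∈ Finset.range (f.natDegree + 1),
          f.coeff k * y (n + (k : ℤ))})) := by
  
  have hcN : f.coeff f.natDegree = 1 := hmonic.coeff_natDegree
  constructor
  · -- measurability
    have hset : {p : (ℤ → ℤ) × (ℤ → ℤ) | p.1 ∈ Vbeta β ∧ p.2 ∈ Vbeta β ∧
        ∃ y ∈ lStarZ, ∀ n : ℤ, p.1 n - p.2 n = ∑ k ∈ Finset.range (f.natDegree + 1),
          f.coeff k * y (n + (k : ℤ))} =
        ((Prod.fst ⁻¹' Vbeta β) ∩ (Prod.snd ⁻¹' Vbeta β)) ∩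
        ((fun p : (ℤ → ℤ) × (ℤ → ℤ) => fun n => p.1 n - p.2 n) ⁻¹'
          {d : ℤ → ℤ | ∃ y ∈ lStarZ, ∀ n : ℤ,
            d n = ∑ k ∈ Finset.range (f.natDegree + 1), f.coeff k * y (n + (k : ℤ))}) := by
      ext p
      simp only [Set.mem_setOf_eq, Set.mem_inter_iff, Set.mem_preimage]
      tauto
    rw [hset]
    have hsub : Measurable (fun p : (ℤ → ℤ) × (ℤ → ℤ) => fun n => p.1 n - p.2 n) :=
      measurable_pi_lambda _ fun n =>
        ((measurable_pi_apply n).comp measurable_fst).sub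
          ((measurable_pi_apply n).comp measurable_snd)
    exact (((meas_Vbeta β).preimage measurable_fst).inter
        ((meas_Vbeta β).preimage measurable_snd)).inter
      ((meas_Dset f.natDegree f.coeff hconst hcN).preimage hsub)
  · -- shift invariance
    intro v v'
    simp only [Set.mem_setOf_eq]
    constructor
    · rintro ⟨h1, h2, y, hy, heq⟩
      refine ⟨(shift_Vbeta β v).1 h1, (shift_Vbeta β v').1 h2,
        fun n => y (n + 1), lStar_shift y hy 1, fun n => ?_⟩
      have := heq (n + 1)
      rw [this]
      apply Finset.sum_congr rfl
      intro k _
      congr 2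
      ring
    · rintro ⟨h1, h2, y, hy, heq⟩
      refine ⟨(shift_Vbeta β v).2 h1, (shift_Vbeta β v').2 h2,
        fun n => y (n + (-1)), lStar_shift y hy (-1), fun n => ?_⟩
      have := heq (n - 1)
      simp only [sub_add_cancel] at this
      rw [this]
      apply Finset.sum_congr rfl
      intro k _
      show f.coeff k * y (n - 1 + k) = f.coeff k * y (n + k + -1)
      congr 2
      ring
end
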